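/- arXiv:1210.2528 — 7 statements merged into one kernel-verified Lean document; each statement's English description precedes it below -/
import Mathlib

section
/- Let A be a finite dimensional associative algebra over a field F of characteristic 0, and let 𝔤 be a Lie algebra acting on A by derivations. If the only 𝔤-invariant two-sided ideals of A are 0 and A itself, then either A is semisimple or A·A = 0. -/
attribute [local instance] LieRing.ofAssociativeRing


open LinearMap Polynomial Module

private lemma isNilpotent_of_trace_pow_algClosed
    {K V : Type*} [Field K] [IsAlgClosed K] [CharZero K]
    [AddCommGroup V] [Module K V] [FiniteDimensional K V] (f : Module.End K V)
    (h : ∀ k : ℕ, LinearMap.trace K V (f ^ (k + 1)) = 0) : IsNilpotent f := by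
  classical
  have hmap : ∀ μ : K, Set.MapsTo f (f.maxGenEigenspace μ) (f.maxGenEigenspace μ) :=
    fun μ => f.mapsTo_maxGenEigenspace_of_comm rfl μ
  set d : K → K := fun μ => (Module.finrank K (f.maxGenEigenspace μ) : K) with hd
  have key : ∀ (μ : K) (k : ℕ),
      LinearMap.trace K _ ((f.restrict (hmap μ)) ^ k) = μ ^ k * d μ := by
    intro μ k
    induction k with
    | zero => simp [d, LinearMap.trace_one]
    | succ k ih =>
      have hnil : IsNilpotent
          (f.restrict (hmap μ) - algebraMap K (Module.End K (f.maxGenEigenspace μ)) μ) := by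
        have h2 := f.isNilpotent_restrict_maxGenEigenspace_sub_algebraMap μ
        have : (f - algebraMap K (Module.End K V) μ).restrict
            (Module.End.mapsTo_maxGenEigenspace_of_comm
              (Algebra.mul_sub_algebraMap_commutes f μ) μ) =
            f.restrict (hmap μ) - algebraMap K (Module.End K (f.maxGenEigenspace μ)) μ := by
          ext x
          simp [LinearMap.restrict_apply, Module.algebraMap_end_apply]
          exact (show (f - algebraMap K (Module.End K V) μ) x = f x - μ • (x : V) by
            simp [Module.algebraMap_end_apply])
        rwa [this] at h2
      have hcomm : Commute ((f.restrict (hmap μ)) ^ k) (f.restrict (hmap μ)) :=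
        (Commute.refl _).pow_left k
      rw [pow_succ, Module.End.mul_eq_comp,
        LinearMap.trace_comp_eq_mul_of_commute_of_isNilpotent μ hcomm hnil, ih]
      ring
  -- the sum over eigenvalues
  have hds := DirectSum.isInternal_submodule_of_iSupIndep_of_iSup_eq_top
    f.independent_maxGenEigenspace f.iSup_maxGenEigenspace_eq_top
  have hfin : {μ : K | f.maxGenEigenspace μ ≠ ⊥}.Finite :=
    WellFoundedGT.finite_ne_bot_of_iSupIndep f.independent_maxGenEigenspace
  set s : Finset K := hfin.toFinset with hs
  have Hsum : ∀ k : ℕ, ∑ μ ∈ s, μ ^ (k + 1) * d μ = 0 := by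
    intro k
    have hmap' : ∀ μ : K, Set.MapsTo (f ^ (k + 1))
        (f.maxGenEigenspace μ) (f.maxGenEigenspace μ) :=
      fun μ => f.mapsTo_maxGenEigenspace_of_comm ((Commute.refl f).pow_right (k + 1)) μ
    have h0 := LinearMap.trace_eq_sum_trace_restrict' hds hfin hmap'
    have h1 : ∀ μ : K, (f ^ (k + 1)).restrict (hmap' μ) = (f.restrict (hmap μ)) ^ (k + 1) := by
      intro μ
      exact (Module.End.pow_restrict (k + 1) (hmap μ)).symm
    calc ∑ μ ∈ s, μ ^ (k + 1) * d μ
        = ∑ μ ∈ s, LinearMap.trace K _ ((f ^ (k + 1)).restrict (hmap' μ)) := by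
          refine Finset.sum_congr rfl fun μ _ => ?_
          rw [h1 μ, key μ (k + 1)]
      _ = LinearMap.trace K V (f ^ (k + 1)) := h0.symm
      _ = 0 := h k
  -- all nonzero eigenvalues give trivial generalized eigenspaces
  have hzero : ∀ μ : K, μ ≠ 0 → f.maxGenEigenspace μ = ⊥ := by
    intro μ0 hμ0
    by_contra hne
    have hμ0s : μ0 ∈ s := by
      rw [hs, Set.Finite.mem_toFinset]; exact hne
    set P : K[X] := X * ∏ ν ∈ s.erase μ0, (X - C ν) with hP
    have hP0 : P.coeff 0 = 0 := by
      simp [hP, coeff_zero_eq_eval_zero]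
    have hPeval : ∀ ν ∈ s.erase μ0, P.eval ν = 0 := by
      intro ν hν
      have : (ν - ν) = 0 := sub_self ν
      simp only [hP, eval_mul, eval_prod, eval_sub, eval_X, eval_C]
      exact mul_eq_zero_of_right _ (Finset.prod_eq_zero hν (by simp))
    have h1 : ∑ μ ∈ s, d μ * P.eval μ = d μ0 * P.eval μ0 := by
      refine Finset.sum_eq_single μ0 (fun ν hν hne' => ?_) (fun habs => absurd hμ0s habs)
      rw [hPeval ν (Finset.mem_erase.mpr ⟨hne', hν⟩), mul_zero]
    have h2 : ∑ μ ∈ s, d μ * P.eval μ = 0 := by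
      have : ∀ μ ∈ s, d μ * P.eval μ
          = ∑ i ∈ Finset.range (P.natDegree + 1), P.coeff i * (μ ^ i * d μ) := by
        intro μ _
        rw [eval_eq_sum_range, Finset.mul_sum]
        exact Finset.sum_congr rfl fun i _ => by ring
      rw [Finset.sum_congr rfl this, Finset.sum_comm]
      refine Finset.sum_eq_zero fun i _ => ?_
      rw [← Finset.mul_sum]
      cases i with
      | zero => rw [hP0, zero_mul]
      | succ j => rw [Hsum j, mul_zero]
    have hevalne : P.eval μ0 ≠ 0 := by
      simp only [hP, eval_mul, eval_prod, eval_sub, eval_X, eval_C]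
      refine mul_ne_zero hμ0 (Finset.prod_ne_zero_iff.mpr fun ν hν => ?_)
      exact sub_ne_zero.mpr (Ne.symm (Finset.mem_erase.mp hν).1)
    have hdne : d μ0 ≠ 0 := by
      have : finrank K (f.maxGenEigenspace μ0) ≠ 0 := by
        rw [ne_eq, Submodule.finrank_eq_zero]
        exact hne
      exact_mod_cast Nat.cast_ne_zero.mpr this
    rw [h1] at h2
    exact (mul_ne_zero hdne hevalne) h2
  have htop : (⊤ : Submodule K V) ≤ f.maxGenEigenspace 0 := by
    rw [← f.iSup_maxGenEigenspace_eq_top]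
    refine iSup_le fun μ => ?_
    by_cases hμ : μ = 0
    · rw [hμ]
    · rw [hzero μ hμ]; exact bot_le
  have := (LinearMap.charpoly_nilpotent_tfae f).out 2 0
  rw [← this]
  intro m
  have hm : m ∈ f.maxGenEigenspace 0 := htop Submodule.mem_top
  rw [Module.End.mem_maxGenEigenspace] at hm
  obtain ⟨k, hk⟩ := hm
  exact ⟨k, by simpa using hk⟩

private lemma isNilpotent_of_trace_pow
    {F V : Type*} [Field F] [CharZero F]
    [AddCommGroup V] [Module F V] [FiniteDimensional F V] (f : Module.End F V)
    (h : ∀ k : ℕ, LinearMap.trace F V (f ^ (k + 1)) = 0) : IsNilpotent f := by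
  classical
  set K := AlgebraicClosure F
  set n := Module.finrank F V with hn
  let b := Module.finBasis F V
  set M : Matrix (Fin n) (Fin n) F := LinearMap.toMatrixAlgEquiv b f with hM
  have hMtr : ∀ k : ℕ, (M ^ (k + 1)).trace = 0 := by
    intro k
    have h1 : M ^ (k + 1) = LinearMap.toMatrixAlgEquiv b (f ^ (k + 1)) := by
      rw [hM, ← map_pow]
    rw [h1]
    have h2 : LinearMap.toMatrixAlgEquiv b (f ^ (k + 1)) = LinearMap.toMatrix b b (f ^ (k + 1)) :=
      rfl
    rw [h2, ← LinearMap.trace_eq_matrix_trace F b]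
    exact h k
  set M' : Matrix (Fin n) (Fin n) K := (algebraMap F K).mapMatrix M with hM'
  have hM'tr : ∀ k : ℕ, (M' ^ (k + 1)).trace = 0 := by
    intro k
    rw [hM', ← map_pow]
    have : ((algebraMap F K).mapMatrix (M ^ (k + 1))).trace
        = algebraMap F K ((M ^ (k + 1)).trace) := by
      simp [Matrix.trace, Matrix.diag, RingHom.mapMatrix_apply, Matrix.map_apply, map_sum]
    rw [this, hMtr k, map_zero]
  have hg : IsNilpotent (Matrix.toLinAlgEquiv' M') := by
    apply isNilpotent_of_trace_pow_algClosed
    intro k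
    rw [← map_pow, LinearMap.trace_eq_matrix_trace K (Pi.basisFun K (Fin n))]
    have h3 : LinearMap.toMatrix (Pi.basisFun K (Fin n)) (Pi.basisFun K (Fin n))
        (Matrix.toLinAlgEquiv' (M' ^ (k + 1)))
        = LinearMap.toMatrixAlgEquiv' (Matrix.toLinAlgEquiv' (M' ^ (k + 1))) := by
      rw [LinearMap.toMatrix_eq_toMatrix']
      rfl
    rw [h3, LinearMap.toMatrixAlgEquiv'_toLinAlgEquiv']
    exact hM'tr k
  have hM'nil : IsNilpotent M' := by
    have := hg.map (Matrix.toLinAlgEquiv'.symm : _ ≃ₐ[K] Matrix (Fin n) (Fin n) K)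
    simpa using this
  obtain ⟨N, hN⟩ := hM'nil
  have hMnil : M ^ N = 0 := by
    have h4 : (algebraMap F K).mapMatrix (M ^ N) = 0 := by
      rw [map_pow]; exact hN
    ext i j
    have := congrArg (fun X => X i j) h4
    simp only [RingHom.mapMatrix_apply, Matrix.map_apply, Matrix.zero_apply] at this
    exact (algebraMap F K).injective (by simpa using this)
  refine ⟨N, ?_⟩
  have h5 : LinearMap.toMatrixAlgEquiv b (f ^ N) = 0 := by
    rw [map_pow, ← hM, hMnil]
  have := congrArg (LinearMap.toMatrixAlgEquiv b).symm h5
  simpa using this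




/-- Let `A` be a finite dimensional associative (not necessarily unital)
algebra over a field `F` of characteristic `0`, and let `𝔤` be a Lie algebra acting on `A`
by derivations.  If the only `𝔤`-invariant two-sided ideals of `A` are `0` and `A`, then
either `A` is semisimple (its Jacobson radical is zero; for a finite dimensional algebra
this means that `A` has no nonzero two-sided ideal with zero multiplication) or `A·A = 0`. -/
theorem semisimple_or_squareZero_of_gInvariant_simple
    (F : Type*) [Field F] [CharZero F]
    (A : Type*) [NonUnitalRing A] [Module F A] [IsScalarTower F A A] [SMulCommClass F A A]
    [FiniteDimensional F A]
    (𝔤 : Type*) [LieRing 𝔤] [LieAlgebra F 𝔤]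
    -- `𝔤` acts on `A` by derivations
    (ρ : 𝔤 →ₗ⁅F⁆ Module.End F A)
    (hder : ∀ x : 𝔤, ∀ a b : A, ρ x (a * b) = ρ x a * b + a * ρ x b)
    -- the only `𝔤`-invariant two-sided ideals of `A` are `0` and `A`
    (hsimple : ∀ I : Submodule F A,
      (∀ a : A, ∀ x ∈ I, a * x ∈ I ∧ x * a ∈ I) →
      (∀ x : 𝔤, ∀ a ∈ I, ρ x a ∈ I) → I = ⊥ ∨ I = ⊤) :
    (∀ I : Submodule F A, (∀ a : A, ∀ x ∈ I, a * x ∈ I ∧ x * a ∈ I) →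
        (∀ x ∈ I, ∀ y ∈ I, x * y = 0) → I = ⊥) ∨
    (∀ a b : A, a * b = 0) := by

  classical
  set Φ : A →ₗ[F] Module.End F A := LinearMap.mul F A with hΦ
  have hΦ_apply : ∀ x y : A, Φ x y = x * y := fun x y => rfl
  have hΦmul : ∀ x y : A, Φ (x * y) = Φ x * Φ y :=
    fun x y => LinearMap.ext fun b => mul_assoc x y b
  set S : Submodule F A := Submodule.span F {z : A | ∃ u v : A, u * v = z} with hS
  have hSideal : ∀ a : A, ∀ x ∈ S, a * x ∈ S ∧ x * a ∈ S := by
    intro a x hx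
    constructor
    · induction hx using Submodule.span_induction with
      | mem z hz =>
        obtain ⟨u, v, rfl⟩ := hz
        exact Submodule.subset_span ⟨a * u, v, mul_assoc a u v⟩
      | zero => rw [mul_zero]; exact S.zero_mem
      | add x y _ _ hx hy => rw [mul_add]; exact S.add_mem hx hy
      | smul c x _ hx => rw [mul_smul_comm]; exact S.smul_mem c hx
    · induction hx using Submodule.span_induction with
      | mem z hz =>
        obtain ⟨u, v, rfl⟩ := hz
        exact Submodule.subset_span ⟨u, v * a, (mul_assoc u v a).symm⟩
      | zero => rw [zero_mul]; exact S.zero_mem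
      | add x y _ _ hx hy => rw [add_mul]; exact S.add_mem hx hy
      | smul c x _ hx => rw [smul_mul_assoc]; exact S.smul_mem c hx
  have hSinv : ∀ g : 𝔤, ∀ x ∈ S, ρ g x ∈ S := by
    intro g x hx
    induction hx using Submodule.span_induction with
    | mem z hz =>
      obtain ⟨u, v, rfl⟩ := hz
      rw [hder g u v]
      exact S.add_mem (Submodule.subset_span ⟨ρ g u, v, rfl⟩)
        (Submodule.subset_span ⟨u, ρ g v, rfl⟩)
    | zero => rw [map_zero]; exact S.zero_mem
    | add x y _ _ hx hy => rw [map_add]; exact S.add_mem hx hy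
    | smul c x _ hx => rw [map_smul]; exact S.smul_mem c hx
  rcases hsimple S hSideal hSinv with hSbot | hStop
  · refine Or.inr fun a b => ?_
    have : a * b ∈ S := Submodule.subset_span ⟨a, b, rfl⟩
    rw [hSbot] at this
    simpa using this
  refine Or.inl fun I hI hIsq => ?_
  by_contra hIne
  obtain ⟨i, hiI, hine⟩ := Submodule.ne_bot_iff I |>.mp hIne
  let R : Submodule F A :=
    { carrier := {x | ∀ a : A, LinearMap.trace F A (Φ x * Φ a) = 0}
      add_mem' := fun {x y} hx hy a => by
        rw [map_add, add_mul, map_add, hx a, hy a, add_zero]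
      zero_mem' := fun a => by rw [map_zero, zero_mul, map_zero]
      smul_mem' := fun c x hx a => by
        rw [map_smul, smul_mul_assoc, map_smul, hx a, smul_zero] }
  have hRmem : ∀ x : A, x ∈ R ↔ ∀ a : A, LinearMap.trace F A (Φ x * Φ a) = 0 :=
    fun x => Iff.rfl
  have hRideal : ∀ a : A, ∀ x ∈ R, a * x ∈ R ∧ x * a ∈ R := by
    intro a x hx
    constructor
    · intro b
      rw [hΦmul a x, mul_assoc, LinearMap.trace_mul_comm, mul_assoc, ← hΦmul b a]
      exact hx (b * a)
    · intro b
      rw [hΦmul x a, mul_assoc, ← hΦmul a b]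
      exact hx (a * b)
  have hδ : ∀ g : 𝔤, ∀ y : A, Φ (ρ g y) = ρ g * Φ y - Φ y * ρ g := by
    intro g y
    ext c
    show (ρ g y) * c = ρ g (y * c) - y * ρ g c
    rw [hder g y c]
    abel
  have hRinv : ∀ g : 𝔤, ∀ x ∈ R, ρ g x ∈ R := by
    intro g x hx b
    rw [hδ g x, sub_mul, map_sub, mul_assoc, LinearMap.trace_mul_comm F (ρ g) (Φ x * Φ b),
      mul_assoc, mul_assoc, ← map_sub, ← mul_sub]
    have h1 : Φ b * ρ g - ρ g * Φ b = -Φ (ρ g b) := by rw [hδ g b]; abel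
    rw [h1, mul_neg, map_neg, hx (ρ g b), neg_zero]
  have hIR : ∀ x ∈ I, x ∈ R := by
    intro x hxI b
    have hxb : x * b ∈ I := (hI b x hxI).2
    have hsq : (Φ x * Φ b) ^ 2 = 0 := by
      rw [← hΦmul, sq, ← hΦmul, hIsq _ hxb _ hxb, map_zero]
    exact (LinearMap.isNilpotent_trace_of_isNilpotent ⟨2, hsq⟩).eq_zero
  rcases hsimple R hRideal hRinv with hRbot | hRtop
  · have : i ∈ (⊥ : Submodule F A) := hRbot ▸ hIR i hiI
    exact hine (by simpa using this)
  have htr2 : ∀ x y : A, LinearMap.trace F A (Φ x * Φ y) = 0 := by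
    intro x y
    have hx : x ∈ R := by rw [hRtop]; trivial
    exact hx y
  have htr1 : ∀ x : A, LinearMap.trace F A (Φ x) = 0 := by
    intro x
    have hxS : x ∈ S := by rw [hStop]; trivial
    induction hxS using Submodule.span_induction with
    | mem z hz => obtain ⟨u, v, rfl⟩ := hz; rw [hΦmul]; exact htr2 u v
    | zero => rw [map_zero, map_zero]
    | add x y _ _ hx hy => rw [map_add, map_add, hx, hy, add_zero]
    | smul c x _ hx => rw [map_smul, map_smul, hx, smul_zero]
  have hpowΦ : ∀ x : A, ∀ k : ℕ, ∃ y : A, (Φ x) ^ (k + 1) = Φ y := by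
    intro x k
    induction k with
    | zero => exact ⟨x, pow_one _⟩
    | succ k ih =>
      obtain ⟨y, hy⟩ := ih
      exact ⟨y * x, by rw [pow_succ, hy, ← hΦmul]⟩
  have hnilΦ : ∀ x : A, IsNilpotent (Φ x) := by
    intro x
    apply isNilpotent_of_trace_pow
    intro k
    cases k with
    | zero => simpa using htr1 x
    | succ k =>
      obtain ⟨y, hy⟩ := hpowΦ x k
      rw [pow_succ, hy, ← hΦmul, hΦmul]
      exact htr2 y x
  let E : LieSubalgebra F (Module.End F A) :=
    { LinearMap.range Φ with
      lie_mem' := by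
        rintro f g hf hg
        obtain ⟨u, rfl⟩ := hf
        obtain ⟨v, rfl⟩ := hg
        exact ⟨u * v - v * u, by rw [map_sub, hΦmul, hΦmul, Ring.lie_def]⟩ }
  haveI : IsNoetherian F E := by infer_instance
  have hEngel : LieModule.IsNilpotent E A := by
    rw [LieModule.isNilpotent_iff_forall (R := F)]
    intro x
    obtain ⟨u, hu⟩ := x.2
    have hx : LieModule.toEnd F E A x = Φ u := by
      ext m
      rw [LieModule.toEnd_apply_apply]
      show (x : Module.End F A) m = Φ u m
      rw [hu]
    rw [hx]
    exact hnilΦ u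
  obtain ⟨k, hk⟩ := LieModule.IsNilpotent.nilpotent F E A
  have hLCS : ∀ k : ℕ, LieModule.lowerCentralSeries F E A k = ⊤ := by
    intro k
    induction k with
    | zero => rfl
    | succ k ih =>
      rw [LieModule.lowerCentralSeries_succ, ih]
      refine le_antisymm le_top ?_
      intro a ha
      clear ha
      have haS : a ∈ S := by rw [hStop]; trivial
      induction haS using Submodule.span_induction with
      | mem z hz =>
        obtain ⟨u, v, rfl⟩ := hz
        have huv : u * v = ⁅(⟨Φ u, ⟨u, rfl⟩⟩ : E), v⁆ := rfl
        rw [huv]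
        exact LieSubmodule.lie_mem_lie trivial trivial
      | zero => exact (⁅(⊤ : LieIdeal F E), (⊤ : LieSubmodule F E A)⁆).zero_mem
      | add x y _ _ hx hy => exact (⁅(⊤ : LieIdeal F E), (⊤ : LieSubmodule F E A)⁆).add_mem hx hy
      | smul c x _ hx => exact (⁅(⊤ : LieIdeal F E), (⊤ : LieSubmodule F E A)⁆).smul_mem c hx
  have htopbot : (⊤ : LieSubmodule F E A) = ⊥ := (hLCS k).symm.trans hk
  have : i ∈ (⊥ : LieSubmodule F E A) := htopbot ▸ LieSubmodule.mem_top i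
  exact hine (by simpa using this)
end

section
/- Let B be a finite dimensional associative algebra over a field F of characteristic 0 equipped with an action of a Lie algebra 𝔤 by derivations. If B is 𝔤-simple (i.e., B·B ≠ 0 and the only 𝔤-invariant two-sided ideals are 0 and B), then B is a simple algebra. -/
open Module LinearMap Polynomial

lemma isNilpotent_of_trace_pow_eq_zero (F : Type*) [Field F] [CharZero F] :
    ∀ (n : ℕ) (V : Type*) [AddCommGroup V] [Module F V] [FiniteDimensional F V],
      finrank F V ≤ n → ∀ f : Module.End F V,
      (∀ k : ℕ, 1 ≤ k → trace F V (f ^ k) = 0) → IsNilpotent f := by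
  intro n
  induction n with
  | zero =>
    intro V _ _ _ hr f _
    have hsub : Subsingleton V := (Module.finrank_zero_iff (R := F)).mp (by omega)
    exact ⟨1, by ext v; exact Subsingleton.elim _ _⟩
  | succ n ih =>
    intro V _ _ _ hr f hf
    by_cases hW : LinearMap.range f = ⊤
    · -- f is bijective; show the space is trivial
      have hsurj : Function.Surjective f := LinearMap.range_eq_top.mp hW
      have hbij : Function.Bijective f :=
        ⟨(LinearMap.injective_iff_surjective).mpr hsurj, hsurj⟩
      have hunit : IsUnit f := (Module.End.isUnit_iff f).mpr hbij
      have hdet : LinearMap.det f ≠ 0 := (hunit.map LinearMap.det).ne_zero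
      have hc0 : f.charpoly.coeff 0 ≠ 0 := by
        intro h
        exact hdet (by rw [LinearMap.det_eq_sign_charpoly_coeff, h, mul_zero])
      have h0 : trace F V (Polynomial.aeval f f.charpoly) = 0 := by
        rw [LinearMap.aeval_self_charpoly]; simp
      rw [Polynomial.aeval_eq_sum_range, map_sum] at h0
      have hsingle : ∀ i ∈ Finset.range (f.charpoly.natDegree + 1), i ≠ 0 →
          trace F V (f.charpoly.coeff i • f ^ i) = 0 := by
        intro i _ hi
        rw [map_smul, hf i (Nat.one_le_iff_ne_zero.mpr hi), smul_zero]
      rw [Finset.sum_eq_single_of_mem 0 (Finset.mem_range.mpr (Nat.succ_pos _)) hsingle] at h0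
      rw [map_smul, pow_zero, LinearMap.trace_one, smul_eq_mul] at h0
      have hfr : (finrank F V : F) = 0 := by
        rcases mul_eq_zero.mp h0 with h | h
        · exact absurd h hc0
        · exact h
      have hsub : Subsingleton V :=
        (Module.finrank_zero_iff (R := F)).mp (Nat.cast_eq_zero.mp hfr)
      exact ⟨1, by ext v; exact Subsingleton.elim _ _⟩
    · set W := LinearMap.range f with hWdef
      have hWmem : ∀ x ∈ W, f x ∈ W := fun x _ => LinearMap.mem_range_self f x
      set g : Module.End F W := f.restrict hWmem with hgdef
      have hrk : finrank F W ≤ n := by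
        have := Submodule.finrank_lt hW
        omega
      set c : V →ₗ[F] W := f.codRestrict W (fun b => LinearMap.mem_range_self f b) with hcdef
      have hic : W.subtype ∘ₗ c = f := LinearMap.subtype_comp_codRestrict f W _
      have hci : c ∘ₗ W.subtype = g := by
        ext w
        rfl
      have hpow : ∀ m : ℕ, W.subtype ∘ₗ ((g ^ m) ∘ₗ c) = f ^ (m + 1) := by
        intro m
        induction m with
        | zero => simpa [Module.End.one_eq_id] using hic
        | succ m ihm =>
          have : (g ^ (m + 1)) ∘ₗ c = ((g ^ m) ∘ₗ c) ∘ₗ f := by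
            rw [pow_succ]
            ext v
            simp only [Module.End.mul_apply, LinearMap.comp_apply, ← hci]
            rfl
          rw [this, ← LinearMap.comp_assoc, ihm, pow_succ]
          rfl
      have htr : ∀ k : ℕ, 1 ≤ k → trace F W (g ^ k) = 0 := by
        intro k hk
        obtain ⟨m, rfl⟩ := Nat.exists_eq_add_of_le hk
        have h1 : g ^ (1 + m) = ((g ^ m) ∘ₗ c) ∘ₗ W.subtype := by
          rw [LinearMap.comp_assoc, hci, add_comm, pow_succ]
          rfl
        rw [h1, LinearMap.trace_comp_comm', hpow m]
        exact hf (m + 1) (Nat.le_add_left 1 m)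
      obtain ⟨m, hm⟩ := ih W hrk g htr
      refine ⟨m + 1, ?_⟩
      rw [← hpow m, hm]
      simp

attribute [local instance 100] LieRing.ofAssociativeRing

set_option maxHeartbeats 2000000 in
/-- A finite dimensional associative algebra `B` over a field of
characteristic `0` with an action of a Lie algebra `𝔤` by derivations which is `𝔤`-simple
(`B·B ≠ 0` and the only `𝔤`-invariant two-sided ideals are `0` and `B`) is simple. -/
theorem simple_of_gSimple_assoc
    (F : Type*) [Field F] [CharZero F]
    (B : Type*) [NonUnitalRing B] [Module F B] [IsScalarTower F B B] [SMulCommClass F B B]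
    [FiniteDimensional F B]
    (𝔤 : Type*) [LieRing 𝔤] [LieAlgebra F 𝔤]
    -- `𝔤` acts on `B` by derivations
    (ρ : 𝔤 →ₗ⁅F⁆ Module.End F B)
    (hder : ∀ x : 𝔤, ∀ a b : B, ρ x (a * b) = ρ x a * b + a * ρ x b)
    -- `B` is `𝔤`-simple
    (hBB : ∃ a b : B, a * b ≠ 0)
    (hgsimple : ∀ I : Submodule F B,
      (∀ a : B, ∀ x ∈ I, a * x ∈ I ∧ x * a ∈ I) →
      (∀ x : 𝔤, ∀ a ∈ I, ρ x a ∈ I) → I = ⊥ ∨ I = ⊤) :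
    -- `B` is simple: `B·B ≠ 0` and it has no proper nonzero two-sided ideals
    (∃ a b : B, a * b ≠ 0) ∧
      ∀ I : Submodule F B, (∀ a : B, ∀ x ∈ I, a * x ∈ I ∧ x * a ∈ I) →
        I = ⊥ ∨ I = ⊤ := by
  classical
  obtain ⟨a₀, b₀, hab₀⟩ := hBB
  -- left multiplication operators
  set L : B →ₗ[F] Module.End F B := LinearMap.mul F B with hLdef
  have hLapp : ∀ a b : B, L a b = a * b := fun a b => rfl
  have hLmul : ∀ a b : B, L (a * b) = L a * L b := by
    intro a b
    ext c
    simp only [hLapp, Module.End.mul_apply, mul_assoc]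
  -- the trace form
  set K : B → B → F := fun a b => LinearMap.trace F B (L a * L b) with hKdef
  have Ksymm : ∀ a b, K a b = K b a := fun a b => LinearMap.trace_mul_comm F (L a) (L b)
  have Kcyc : ∀ a b c, K (a * b) c = K a (b * c) := by
    intro a b c
    simp only [hKdef, hLmul, mul_assoc]
  -- the radical of the trace form is a 𝔤-invariant ideal
  set Rad : Submodule F B :=
    { carrier := {a : B | ∀ b, K a b = 0}
      add_mem' := by
        intro a a' ha ha' b
        simp only [hKdef] at *
        rw [map_add, add_mul, map_add]
        rw [show trace F B (L a * L b) = 0 from ha b, show trace F B (L a' * L b) = 0 from ha' b,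
          add_zero]
      zero_mem' := by
        intro b
        simp [hKdef]
      smul_mem' := by
        intro t a ha b
        simp only [hKdef] at *
        rw [map_smul, smul_mul_assoc, map_smul, show trace F B (L a * L b) = 0 from ha b,
          smul_zero] } with hRadDef
  have hRadMem : ∀ a : B, a ∈ Rad ↔ ∀ b, K a b = 0 := fun a => Iff.rfl
  have hRadIdeal : ∀ a : B, ∀ x ∈ Rad, a * x ∈ Rad ∧ x * a ∈ Rad := by
    intro a x hx
    constructor
    · intro b
      calc K (a * x) b = K b (a * x) := Ksymm _ _
        _ = K (b * a) x := (Kcyc _ _ _).symm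
        _ = K x (b * a) := Ksymm _ _
        _ = 0 := hx _
    · intro b
      rw [Kcyc]
      exact hx _
  have hLder : ∀ (x : 𝔤) (a : B), L (ρ x a) = ρ x * L a - L a * ρ x := by
    intro x a
    ext c
    simp only [LinearMap.sub_apply, Module.End.mul_apply, hLapp, hder x a c]
    abel
  have Kskew : ∀ (x : 𝔤) (a b : B), K (ρ x a) b = - K a (ρ x b) := by
    intro x a b
    have h1 : K (ρ x a) b = trace F B (ρ x * (L a * L b)) - trace F B (L a * (ρ x * L b)) := by
      simp only [hKdef, hLder, sub_mul, map_sub, mul_assoc]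
    have h2 : K a (ρ x b) = trace F B (L a * (ρ x * L b)) - trace F B ((L a * L b) * ρ x) := by
      simp only [hKdef, hLder, mul_sub, map_sub, mul_assoc]
    rw [h1, h2, LinearMap.trace_mul_comm F (ρ x) (L a * L b)]
    abel
  have hRadInv : ∀ x : 𝔤, ∀ a ∈ Rad, ρ x a ∈ Rad := by
    intro x a ha b
    rw [hRadMem] at ha
    rw [Kskew, ha (ρ x b), neg_zero]
  -- the span of all products is a nonzero 𝔤-invariant ideal, hence everything
  set M2 : Submodule F B := Submodule.span F {z : B | ∃ a b : B, a * b = z} with hM2def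
  have hM2mem : ∀ a b : B, a * b ∈ M2 := fun a b => Submodule.subset_span ⟨a, b, rfl⟩
  have hM2ideal : ∀ a : B, ∀ x ∈ M2, a * x ∈ M2 ∧ x * a ∈ M2 := by
    intro a x hx
    constructor
    · refine Submodule.span_induction (p := fun z _ => a * z ∈ M2) ?_ ?_ ?_ ?_ hx
      · rintro z ⟨u, v, rfl⟩
        rw [← mul_assoc]
        exact hM2mem _ _
      · simp
      · intro y z _ _ hy hz
        rw [mul_add]
        exact M2.add_mem hy hz
      · intro t y _ hy
        rw [mul_smul_comm]
        exact M2.smul_mem t hy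
    · refine Submodule.span_induction (p := fun z _ => z * a ∈ M2) ?_ ?_ ?_ ?_ hx
      · rintro z ⟨u, v, rfl⟩
        rw [mul_assoc]
        exact hM2mem _ _
      · simp
      · intro y z _ _ hy hz
        rw [add_mul]
        exact M2.add_mem hy hz
      · intro t y _ hy
        rw [smul_mul_assoc]
        exact M2.smul_mem t hy
  have hM2inv : ∀ x : 𝔤, ∀ a ∈ M2, ρ x a ∈ M2 := by
    intro x a ha
    refine Submodule.span_induction (p := fun z _ => ρ x z ∈ M2) ?_ ?_ ?_ ?_ ha
    · rintro z ⟨u, v, rfl⟩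
      rw [hder]
      exact M2.add_mem (hM2mem _ _) (hM2mem _ _)
    · simp
    · intro y z _ _ hy hz
      rw [map_add]
      exact M2.add_mem hy hz
    · intro t y _ hy
      rw [map_smul]
      exact M2.smul_mem t hy
  have hM2top : M2 = ⊤ := by
    rcases hgsimple M2 hM2ideal hM2inv with h | h
    · exact absurd ((Submodule.mem_bot F).mp (h ▸ hM2mem a₀ b₀)) hab₀
    · exact h
  -- case split on the radical of the trace form
  rcases hgsimple Rad hRadIdeal hRadInv with hRad | hRad
  · -- the trace form is nondegenerate
    refine ⟨⟨a₀, b₀, hab₀⟩, ?_⟩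
    intro I hI
    have hRad0 : ∀ z : B, (∀ b, K z b = 0) → z = 0 := by
      intro z hz
      exact (Submodule.mem_bot F).mp (hRad ▸ ((hRadMem z).mpr hz))
    -- the bilinear form as a linear map into the dual
    set φ : B →ₗ[F] Module.Dual F B :=
      { toFun := fun a =>
          { toFun := fun b => K a b
            map_add' := by
              intro b b'
              simp only [hKdef, map_add, mul_add, map_add]
            map_smul' := by
              intro t b
              simp only [hKdef, map_smul, mul_smul_comm, map_smul, RingHom.id_apply,
                smul_eq_mul] }
        map_add' := by
          intro a a'
          ext b
          simp only [hKdef, map_add, add_mul, map_add, LinearMap.coe_mk, AddHom.coe_mk,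
            LinearMap.add_apply]
        map_smul' := by
          intro t a
          ext b
          simp only [hKdef, map_smul, smul_mul_assoc, map_smul, RingHom.id_apply,
            LinearMap.coe_mk, AddHom.coe_mk, LinearMap.smul_apply, smul_eq_mul] } with hφdef
    have hφapp : ∀ a b : B, φ a b = K a b := fun a b => rfl
    have hφinj : Function.Injective φ := by
      rw [← LinearMap.ker_eq_bot]
      rw [eq_bot_iff]
      intro a ha
      rw [Submodule.mem_bot]
      exact hRad0 a fun b => by rw [← hφapp]; rw [LinearMap.mem_ker] at ha; rw [ha]; rfl
    have hφsurj : LinearMap.range φ = ⊤ := by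
      apply Submodule.eq_top_of_finrank_eq
      rw [LinearMap.finrank_range_of_inj hφinj, Subspace.dual_finrank_eq]
    set e : B ≃ₗ[F] Module.Dual F B :=
      LinearEquiv.ofBijective φ ⟨hφinj, LinearMap.range_eq_top.mp hφsurj⟩ with hedef
    -- the orthogonal complement of I
    set J : Submodule F B := Submodule.comap (e : B →ₗ[F] Module.Dual F B)
      (Submodule.dualAnnihilator I) with hJdef
    have hJmem : ∀ y : B, y ∈ J ↔ ∀ x ∈ I, K y x = 0 := by
      intro y
      rw [hJdef, Submodule.mem_comap, Submodule.mem_dualAnnihilator]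
      constructor
      · intro h x hx
        exact h x hx
      · intro h x hx
        exact h x hx
    have hJrank : finrank F I + finrank F J = finrank F B := by
      have h1 : finrank F J = finrank F (Submodule.dualAnnihilator I) := by
        rw [hJdef, Submodule.comap_equiv_eq_map_symm]
        exact LinearEquiv.finrank_map_eq e.symm _
      have h2 : finrank F (Submodule.dualAnnihilator I) = finrank F (B ⧸ I) :=
        ((Subspace.quotEquivAnnihilator I).finrank_eq).symm
      have h3 := Submodule.finrank_quotient_add_finrank I
      omega
    have hJideal : ∀ a : B, ∀ y ∈ J, a * y ∈ J ∧ y * a ∈ J := by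
      intro a y hy
      rw [hJmem] at hy
      constructor
      · rw [hJmem]
        intro x hx
        calc K (a * y) x = K x (a * y) := Ksymm _ _
          _ = K (x * a) y := (Kcyc _ _ _).symm
          _ = K y (x * a) := Ksymm _ _
          _ = 0 := hy _ ((hI a x hx).2)
      · rw [hJmem]
        intro x hx
        rw [Kcyc]
        exact hy _ ((hI a x hx).1)
    -- the intersection of I with its orthogonal complement vanishes
    have hTsq : ∀ t ∈ I ⊓ J, ∀ t' ∈ I ⊓ J, t * t' = 0 := by
      intro t ht t' ht'
      apply hRad0
      intro b
      rw [Kcyc]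
      exact ((hJmem t).mp ht.2) _ ((hI b t' ht'.1).2)
    have hTbot : I ⊓ J = ⊥ := by
      rw [eq_bot_iff]
      intro t ht
      rw [Submodule.mem_bot]
      apply hRad0
      intro b
      have htb : t * b ∈ I ⊓ J := ⟨(hI b t ht.1).2, ((hJideal b t ht.2).2)⟩
      have hM : L t * L b = L (t * b) := (hLmul t b).symm
      have hMsq : (L t * L b) ^ 2 = 0 := by
        rw [sq, hM, ← hLmul, hTsq _ htb _ htb, map_zero]
      have : IsNilpotent (LinearMap.trace F B (L t * L b)) :=
        LinearMap.isNilpotent_trace_of_isNilpotent ⟨2, hMsq⟩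
      exact this.eq_zero
    have hsup : I ⊔ J = ⊤ := by
      apply Submodule.eq_top_of_finrank_eq
      have := Submodule.finrank_sup_add_finrank_inf_eq I J
      rw [hTbot, finrank_bot] at this
      omega
    -- I and J annihilate each other
    have hIJ : ∀ x ∈ I, ∀ y ∈ J, x * y = 0 ∧ y * x = 0 := by
      intro x hx y hy
      constructor
      · apply hRad0
        intro b
        rw [Kcyc]
        exact Ksymm x (y * b) ▸ ((hJmem (y * b)).mp ((hJideal b y hy).2)) x hx
      · apply hRad0
        intro b
        rw [Kcyc]
        exact ((hJmem y).mp hy) _ ((hI b x hx).2)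
    -- the two-sided annihilator of B is a 𝔤-invariant ideal, hence zero
    set Ann : Submodule F B :=
      { carrier := {x : B | ∀ b : B, x * b = 0 ∧ b * x = 0}
        add_mem' := by
          intro x y hx hy b
          constructor
          · rw [add_mul, (hx b).1, (hy b).1, add_zero]
          · rw [mul_add, (hx b).2, (hy b).2, add_zero]
        zero_mem' := fun b => ⟨zero_mul b, mul_zero b⟩
        smul_mem' := by
          intro t x hx b
          constructor
          · rw [smul_mul_assoc, (hx b).1, smul_zero]
          · rw [mul_smul_comm, (hx b).2, smul_zero] } with hAnnDef
    have hAnnMem : ∀ x : B, x ∈ Ann ↔ ∀ b : B, x * b = 0 ∧ b * x = 0 := fun x => Iff.rfl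
    have hAnnIdeal : ∀ a : B, ∀ x ∈ Ann, a * x ∈ Ann ∧ x * a ∈ Ann := by
      intro a x hx
      rw [hAnnMem] at hx
      constructor
      · rw [hAnnMem]
        intro b
        constructor
        · rw [mul_assoc, (hx b).1, mul_zero]
        · rw [← mul_assoc, (hx (b * a)).2]
      · rw [hAnnMem]
        intro b
        constructor
        · rw [mul_assoc, (hx (a * b)).1]
        · rw [← mul_assoc, (hx b).2, zero_mul]
    have hAnnInv : ∀ x : 𝔤, ∀ a ∈ Ann, ρ x a ∈ Ann := by
      intro x a ha
      rw [hAnnMem] at ha ⊢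
      intro b
      constructor
      · have h := hder x a b
        rw [(ha b).1, map_zero, (ha (ρ x b)).1, add_zero] at h
        exact h.symm
      · have h := hder x b a
        rw [(ha b).2, map_zero, (ha (ρ x b)).2, zero_add] at h
        exact h.symm
    have hAnnBot : Ann = ⊥ := by
      rcases hgsimple Ann hAnnIdeal hAnnInv with h | h
      · exact h
      · exfalso
        exact hab₀ (((hAnnMem a₀).mp (h ▸ Submodule.mem_top)) b₀).1
    -- every two-sided ideal is automatically 𝔤-invariant
    have hIinv : ∀ g : 𝔤, ∀ x ∈ I, ρ g x ∈ I := by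
      intro g x hxI
      have hmem : ρ g x ∈ I ⊔ J := hsup ▸ Submodule.mem_top
      obtain ⟨p, hp, q, hq, hpq⟩ := Submodule.mem_sup.mp hmem
      have hqdef : q = ρ g x - p := by rw [← hpq]; abel
      have hqAnn : q ∈ Ann := by
        rw [hAnnMem]
        intro b
        have hb : b ∈ I ⊔ J := hsup ▸ Submodule.mem_top
        obtain ⟨u, hu, v, hv, huv⟩ := Submodule.mem_sup.mp hb
        have hqv0 : q * v = 0 := by
          have h1 : ρ g x * v = -(x * ρ g v) := by
            have h := hder g x v
            rw [(hIJ x hxI v hv).1, map_zero] at h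
            exact eq_neg_of_add_eq_zero_left h.symm
          have h2 : q * v = -(x * ρ g v) := by
            rw [hqdef, sub_mul, h1, (hIJ p hp v hv).1, sub_zero]
          have h3 : q * v ∈ I := by
            rw [h2]
            exact I.neg_mem (hI (ρ g v) x hxI).2
          have h4 : q * v ∈ J := (hJideal v q hq).2
          exact (Submodule.mem_bot F).mp (hTbot ▸ (Submodule.mem_inf.mpr ⟨h3, h4⟩))
        have hvq0 : v * q = 0 := by
          have h1 : v * ρ g x = -(ρ g v * x) := by
            have h := hder g v x
            rw [(hIJ x hxI v hv).2, map_zero] at h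
            exact eq_neg_of_add_eq_zero_right h.symm
          have h2 : v * q = -(ρ g v * x) := by
            rw [hqdef, mul_sub, h1, (hIJ p hp v hv).2, sub_zero]
          have h3 : v * q ∈ I := by
            rw [h2]
            exact I.neg_mem (hI (ρ g v) x hxI).1
          have h4 : v * q ∈ J := (hJideal q v hv).2
          exact (Submodule.mem_bot F).mp (hTbot ▸ (Submodule.mem_inf.mpr ⟨h3, h4⟩))
        constructor
        · rw [← huv, mul_add, (hIJ u hu q hq).2, hqv0, add_zero]
        · rw [← huv, add_mul, (hIJ u hu q hq).1, hvq0, add_zero]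
      have hq0 : q = 0 := (Submodule.mem_bot F).mp (hAnnBot ▸ hqAnn)
      have : ρ g x = p := by rw [← hpq, hq0, add_zero]
      rw [this]
      exact hp
    exact hgsimple I hI hIinv
  · -- the trace form vanishes identically : contradiction
    exfalso
    have hK0 : ∀ a b : B, K a b = 0 := by
      intro a b
      exact (hRadMem a).mp (hRad ▸ Submodule.mem_top) b
    -- every left multiplication operator is nilpotent
    have hpowL : ∀ (c : B) (k : ℕ), ∃ d : B, (L c) ^ (k + 1) = L d := by
      intro c k
      induction k with
      | zero => exact ⟨c, pow_one _⟩
      | succ k ihk =>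
        obtain ⟨d, hd⟩ := ihk
        exact ⟨d * c, by rw [pow_succ, hd, hLmul]⟩
    have htrL : ∀ (c : B) (k : ℕ), LinearMap.trace F B ((L c) ^ (k + 2)) = 0 := by
      intro c k
      obtain ⟨d, hd⟩ := hpowL c k
      have : (L c) ^ (k + 2) = L d * L c := by rw [pow_succ, hd]
      rw [this]
      exact hK0 d c
    have hLnil : ∀ c : B, IsNilpotent (L c) := by
      intro c
      have h2 : IsNilpotent ((L c) ^ 2) := by
        refine isNilpotent_of_trace_pow_eq_zero F (finrank F B) B le_rfl _ ?_
        intro k hk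
        obtain ⟨j, rfl⟩ := Nat.exists_eq_add_of_le hk
        rw [← pow_mul]
        have : 2 * (1 + j) = 2 * j + 2 := by ring
        rw [this]
        exact htrL c _
      obtain ⟨m, hm⟩ := h2
      exact ⟨2 * m, by rw [pow_mul]; exact hm⟩
    -- the range of `L` is a Lie subalgebra acting nilpotently on `B`
    set S : LieSubalgebra F (Module.End F B) :=
      { toSubmodule := LinearMap.range L
        lie_mem' := by
          intro x y hx hy
          obtain ⟨a, rfl⟩ := hx
          obtain ⟨b, rfl⟩ := hy
          exact ⟨a * b - b * a, by rw [map_sub, hLmul, hLmul, Ring.lie_def]⟩ } with hSdef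
    have hSnil : ∀ x : S, IsNilpotent (LieModule.toEnd F S B x) := by
      intro x
      obtain ⟨c, hc⟩ := x.2
      have hx : LieModule.toEnd F S B x = (x : Module.End F B) := by
        ext m
        rfl
      rw [hx, ← hc]
      exact hLnil c
    have hLM : LieModule.IsNilpotent S B := (LieModule.isNilpotent_iff_forall' (R := F)).mpr hSnil
    obtain ⟨k, hk⟩ := (LieModule.isNilpotent_iff F S B).mp hLM
    have htop : ∀ j : ℕ, LieModule.lowerCentralSeries F S B j = ⊤ := by
      intro j
      induction j with
      | zero => exact LieModule.lowerCentralSeries_zero _ _ _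
      | succ j ihj =>
        rw [LieModule.lowerCentralSeries_succ, ihj]
        rw [eq_top_iff]
        intro m _
        have hm : m ∈ M2 := hM2top ▸ Submodule.mem_top
        refine Submodule.span_induction
          (p := fun z _ => z ∈ ⁅(⊤ : LieIdeal F S), (⊤ : LieSubmodule F S B)⁆) ?_ ?_ ?_ ?_ hm
        · rintro z ⟨u, v, rfl⟩
          have : u * v = ⁅(⟨L u, ⟨u, rfl⟩⟩ : S), v⁆ := rfl
          rw [this]
          exact LieSubmodule.lie_mem_lie (LieSubmodule.mem_top _) (LieSubmodule.mem_top _)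
        · exact zero_mem _
        · intro y z _ _ hy hz
          exact add_mem hy hz
        · intro t y _ hy
          exact Submodule.smul_mem _ t (by exact hy)
    have : a₀ * b₀ ∈ LieModule.lowerCentralSeries F S B k := (htop k).symm ▸ LieSubmodule.mem_top _
    rw [hk] at this
    exact hab₀ ((LieSubmodule.mem_bot _).mp this)
end

section
/- Let C be a coalgebra over a field F, V a finite dimensional right C-comodule, and ζ : C* → End_F(V) the algebra homomorphism giving the induced left C*-module structure on V. If A ⊆ C* is a subalgebra that separates the points of C (i.e., for every nonzero c ∈ C there is φ ∈ A with φ(c) ≠ 0), then ζ(A) = ζ(C*). -/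
open TensorProduct

/-- Let `C` be a coalgebra over a field `F`, `V` a finite dimensional right
`C`-comodule, and `ζ : C* → End_F(V)` the induced map, `ζ(φ)(v) = (id ⊗ φ)(ρ(v))`.  If
`A ⊆ C*` is a subalgebra (for the convolution product) separating the points of `C`, then
`ζ(A) = ζ(C*)`. -/
theorem dense_subalgebra_same_operators
    (F : Type*) [Field F]
    (C : Type*) [AddCommGroup C] [Module F C] [Coalgebra F C]
    (V : Type*) [AddCommGroup V] [Module F V] [FiniteDimensional F V]
    -- the right `C`-comodule structure on `V`
    (ρ : V →ₗ[F] V ⊗[F] C)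
    (hcounit : ∀ v : V, (TensorProduct.rid F V)
      ((TensorProduct.map LinearMap.id (Coalgebra.counit (R := F) (A := C))) (ρ v)) = v)
    (hcoassoc : ∀ v : V, (TensorProduct.assoc F V C C)
        ((TensorProduct.map ρ LinearMap.id) (ρ v)) =
      (TensorProduct.map LinearMap.id (Coalgebra.comul (R := F) (A := C))) (ρ v))
    -- the induced `C*`-action on `V`
    (ζ : (C →ₗ[F] F) → (V →ₗ[F] V))
    (hζ : ∀ φ : C →ₗ[F] F, ζ φ =
      (TensorProduct.rid F V).toLinearMap ∘ₗ TensorProduct.map LinearMap.id φ ∘ₗ ρ)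
    -- `A` is a subalgebra of `C*` for the convolution product
    (A : Submodule F (C →ₗ[F] F))
    (hA1 : Coalgebra.counit (R := F) (A := C) ∈ A)
    (hAmul : ∀ φ ∈ A, ∀ ψ ∈ A,
      (LinearMap.mul' F F ∘ₗ TensorProduct.map φ ψ ∘ₗ Coalgebra.comul (R := F) (A := C)) ∈ A)
    -- `A` separates the points of `C`
    (hdense : ∀ c : C, c ≠ 0 → ∃ φ ∈ A, φ c ≠ 0) :
    ζ '' (A : Set (C →ₗ[F] F)) = Set.range ζ := by
  classical
  -- the "coefficient" map `T : V* ⊗ V → C`, `f ⊗ v ↦ (f ⊗ id)(ρ v)`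
  set T : ((V →ₗ[F] F) ⊗[F] V) →ₗ[F] C :=
    (TensorProduct.lid F C).toLinearMap ∘ₗ
      TensorProduct.map (contractLeft F V) LinearMap.id ∘ₗ
      (TensorProduct.assoc F (V →ₗ[F] F) V C).symm.toLinearMap ∘ₗ
      TensorProduct.map LinearMap.id ρ with hTdef
  -- key computation : `f (ζ φ v) = φ (T (f ⊗ₜ v))`
  have key : ∀ (φ : C →ₗ[F] F) (f : V →ₗ[F] F) (v : V),
      f (ζ φ v) = φ (T (f ⊗ₜ[F] v)) := by
    intro φ f v
    rw [hζ φ]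
    simp only [hTdef, LinearMap.coe_comp, Function.comp_apply, LinearEquiv.coe_coe,
      TensorProduct.map_tmul, LinearMap.id_coe, id_eq]
    induction ρ v using TensorProduct.induction_on with
    | zero => simp
    | tmul x c =>
        simp [TensorProduct.smul_tmul', mul_comm]
    | add x y hx hy =>
        simp only [TensorProduct.tmul_add, map_add, hx, hy]
  -- the coefficient space
  set W : Submodule F C := LinearMap.range T with hWdef
  haveI : FiniteDimensional F ((V →ₗ[F] F) ⊗[F] V) := inferInstance
  haveI : FiniteDimensional F W := inferInstance
  -- if two functionals agree on `W`, they induce the same operator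
  have same : ∀ φ ψ : C →ₗ[F] F, (∀ w ∈ W, φ w = ψ w) → ζ φ = ζ ψ := by
    intro φ ψ h
    ext v
    have : ∀ f : Module.Dual F V, f (ζ φ v - ζ ψ v) = 0 := by
      intro f
      have hm : T (f ⊗ₜ[F] v) ∈ W := ⟨f ⊗ₜ[F] v, rfl⟩
      rw [map_sub, key, key, h _ hm, sub_self]
    exact sub_eq_zero.mp ((Module.forall_dual_apply_eq_zero_iff F (ζ φ v - ζ ψ v)).mp this)
  haveI : FiniteDimensional F (Module.Dual F W) := inferInstance
  haveI : FiniteDimensional F (Submodule.map (W.subtype.dualMap) A) :=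
    FiniteDimensional.finiteDimensional_submodule _
  -- the image of `A` in `Dual F W` is everything
  have himg : Submodule.map (W.subtype.dualMap) A = ⊤ := by
    have hco : (Submodule.map (W.subtype.dualMap) A).dualCoannihilator = ⊥ := by
      rw [Submodule.eq_bot_iff]
      intro w hw
      rw [Submodule.mem_dualCoannihilator] at hw
      by_contra hne
      have hne' : (w : C) ≠ 0 := fun h => hne (Subtype.ext h)
      obtain ⟨φ, hφA, hφw⟩ := hdense (w : C) hne'
      exact hφw (hw _ ⟨φ, hφA, rfl⟩)
    have := congrArg Submodule.dualAnnihilator hco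
    rwa [Subspace.dualCoannihilator_dualAnnihilator_eq, Submodule.dualAnnihilator_bot] at this
  -- conclude
  apply Set.Subset.antisymm
  · rintro x ⟨φ, _, rfl⟩; exact ⟨φ, rfl⟩
  · rintro x ⟨φ, rfl⟩
    have : W.subtype.dualMap φ ∈ Submodule.map (W.subtype.dualMap) A := by
      rw [himg]; trivial
    obtain ⟨ψ, hψA, hψ⟩ := this
    refine ⟨ψ, hψA, ?_⟩
    apply same
    intro w hw
    have := LinearMap.congr_fun hψ ⟨w, hw⟩
    simpa using this
end

section
/- Let A be a finite dimensional associative algebra over an algebraically closed field F of characteristic 0 with a rational action of a reductive affine algebraic group G by automorphisms and anti-automorphisms, and suppose the Jacobson radical J of A satisfies J² = 0. Assume there exists a G₀-equivariant algebra section φ : A/J → A of the projection π : A → A/J, where G₀ ⊆ G is the index-2 subgroup acting by automorphisms, and fix g ∈ G \ G₀. Then the map φ̃(a) = (φ(a) + g·φ(g⁻¹·a))/2 is a G-equivariant algebra homomorphism section of π. -/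
/-- Let `A` be a finite dimensional associative algebra over an algebraically
closed field `F` of characteristic `0` with an action of a group `G` by automorphisms and
anti-automorphisms (the elements of the index-2 subgroup `G₀` act by automorphisms, the
others by anti-automorphisms), and suppose the Jacobson radical `J` of `A` satisfies
`J² = 0` and is `G`-invariant.  Assume there exists a `G₀`-equivariant algebra section
`φ : A/J → A` of the projection `π : A → A/J` (the quotient is modelled by a surjective
equivariant algebra homomorphism `π : A → Q` with kernel `J`), and fix `g ∈ G \ G₀`.
Then `φ̃(a) = (φ(a) + g·φ(g⁻¹·a))/2` is a `G`-equivariant algebra homomorphism section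
of `π`. -/
theorem averaged_section_is_equivariant_hom
    (F : Type*) [Field F] [IsAlgClosed F] [CharZero F]
    (A : Type*) [NonUnitalRing A] [Module F A] [FiniteDimensional F A]
    (G : Type*) [Group G] [DistribMulAction G A] [SMulCommClass G F A]
    (G₀ : Subgroup G) (hindex : G₀.index = 2)
    -- elements of `G₀` act by automorphisms, the others by anti-automorphisms
    (hauto : ∀ h ∈ G₀, ∀ a b : A, h • (a * b) = (h • a) * (h • b))
    (hanti : ∀ h ∉ G₀, ∀ a b : A, h • (a * b) = (h • b) * (h • a))
    -- `J` is the Jacobson radical of `A`: a `G`-invariant two-sided ideal with `J² = 0`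
    -- containing every two-sided ideal with zero multiplication
    (J : Submodule F A)
    (hJideal : ∀ a : A, ∀ x ∈ J, a * x ∈ J ∧ x * a ∈ J)
    (hJ2 : ∀ x ∈ J, ∀ y ∈ J, x * y = 0)
    (hJG : ∀ k : G, ∀ x ∈ J, k • x ∈ J)
    (hJrad : ∀ I : Submodule F A, (∀ a : A, ∀ x ∈ I, a * x ∈ I ∧ x * a ∈ I) →
      (∀ x ∈ I, ∀ y ∈ I, x * y = 0) → I ≤ J)
    -- the projection `π : A → A/J`, `G`-equivariantly
    (Q : Type*) [NonUnitalRing Q] [Module F Q] [DistribMulAction G Q] [SMulCommClass G F Q]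
    (π : A →ₗ[F] Q) (hπmul : ∀ a b : A, π (a * b) = π a * π b)
    (hπsurj : Function.Surjective π) (hπker : LinearMap.ker π = J)
    (hπequiv : ∀ k : G, ∀ a : A, π (k • a) = k • π a)
    -- the `G₀`-equivariant algebra section `φ`
    (φ : Q →ₗ[F] A)
    (hφsec : ∀ q : Q, π (φ q) = q)
    (hφmul : ∀ a b : Q, φ (a * b) = φ a * φ b)
    (hφequiv : ∀ h ∈ G₀, ∀ q : Q, φ (h • q) = h • φ q)
    -- a fixed element `g ∈ G \ G₀`
    (g : G) (hg : g ∉ G₀) :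
    -- `φ̃ = (φ(a) + g·φ(g⁻¹·a))/2` is a `G`-equivariant algebra homomorphism section of `π`
    (∀ q : Q, π ((2 : F)⁻¹ • (φ q + g • φ (g⁻¹ • q))) = q) ∧
    (∀ k : G, ∀ q : Q, (2 : F)⁻¹ • (φ (k • q) + g • φ (g⁻¹ • k • q)) =
      k • ((2 : F)⁻¹ • (φ q + g • φ (g⁻¹ • q)))) ∧
    (∀ q r : Q, (2 : F)⁻¹ • (φ (q * r) + g • φ (g⁻¹ • (q * r))) =
      ((2 : F)⁻¹ • (φ q + g • φ (g⁻¹ • q))) * ((2 : F)⁻¹ • (φ r + g • φ (g⁻¹ • r)))) := by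
  -- basic group facts from index 2
  have hmem : ∀ a b : G, (a * b ∈ G₀ ↔ (a ∈ G₀ ↔ b ∈ G₀)) :=
    fun a b => Subgroup.mul_mem_iff_of_index_two hindex
  have hginv : g⁻¹ ∉ G₀ := fun h => hg (by simpa using G₀.inv_mem h)
  -- ψ q = g • φ (g⁻¹ • q) is also a section
  have hψsec : ∀ q : Q, π (g • φ (g⁻¹ • q)) = q := by
    intro q
    rw [hπequiv, hφsec, smul_inv_smul]
  -- δ q = φ q - ψ q lies in J
  have hδ : ∀ q : Q, φ q - g • φ (g⁻¹ • q) ∈ J := by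
    intro q
    rw [← hπker, LinearMap.mem_ker, map_sub, hφsec, hψsec, sub_self]
  -- Q has an anti-action for elements outside G₀
  have hQanti : ∀ k ∉ G₀, ∀ q r : Q, k • (q * r) = (k • r) * (k • q) := by
    intro k hk q r
    obtain ⟨a, rfl⟩ := hπsurj q
    obtain ⟨b, rfl⟩ := hπsurj r
    rw [← hπmul, ← hπequiv, hanti k hk a b, hπmul, hπequiv, hπequiv]
  have h2 : (2 : F) ≠ 0 := by norm_num
  refine ⟨?_, ?_, ?_⟩
  · -- section
    intro q
    rw [map_smul, map_add, hφsec, hψsec, ← two_smul F q, smul_smul, inv_mul_cancel₀ h2,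
      one_smul]
  · -- equivariance
    intro k q
    rw [smul_comm k ((2 : F)⁻¹) (φ q + g • φ (g⁻¹ • q))]
    congr 1
    rw [smul_add k]
    by_cases hk : k ∈ G₀
    · have hnk : g⁻¹ * k ∉ G₀ := fun h => hginv (((hmem g⁻¹ k).mp h).mpr hk)
      have hc : (g⁻¹ * k) * g ∈ G₀ := (hmem _ _).mpr (iff_of_false hnk hg)
      congr 1
      · exact hφequiv k hk q
      · have harg : g⁻¹ • k • q = ((g⁻¹ * k) * g) • g⁻¹ • q := by
          simp only [smul_smul]; congr 1; group
        rw [harg, hφequiv _ hc]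
        simp only [smul_smul]
        congr 1
        group
    · have h1 : k * g ∈ G₀ := (hmem _ _).mpr (iff_of_false hk hg)
      have h2' : g⁻¹ * k ∈ G₀ := (hmem _ _).mpr (iff_of_false hginv hk)
      have e1 : φ (k • q) = k • g • φ (g⁻¹ • q) := by
        have harg : k • q = (k * g) • g⁻¹ • q := by
          simp only [smul_smul]; congr 1; group
        rw [harg, hφequiv _ h1, ← smul_smul]
      have e2 : g • φ (g⁻¹ • k • q) = k • φ q := by
        have harg : g⁻¹ • k • q = (g⁻¹ * k) • q := by rw [smul_smul]
        rw [harg, hφequiv _ h2', smul_smul]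
        congr 1
        group
      rw [e1, e2, add_comm]
  · -- multiplicativity
    intro q r
    set x := φ q with hx
    set y := g • φ (g⁻¹ • q) with hy
    set u := φ r with hu
    set v := g • φ (g⁻¹ • r) with hv
    have hfmul : φ (q * r) = x * u := hφmul q r
    have hψmul : g • φ (g⁻¹ • (q * r)) = y * v := by
      rw [hQanti g⁻¹ hginv, hφmul, hanti g hg]
    rw [hfmul, hψmul]
    -- cross terms vanish since (x - y)(u - v) = 0
    have h0 : (x - y) * (u - v) = 0 := hJ2 _ (hδ q) _ (hδ r)
    have h0' : x * u + y * v = x * v + y * u := by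
      rw [← sub_eq_zero, ← h0]
      rw [sub_mul, mul_sub, mul_sub]
      abel
    -- remove scalars by multiplying by 4
    have h4 : (4 : F) ≠ 0 := by norm_num
    have quarter : ∀ X U : A, X * U = (4 : F) • (((2 : F)⁻¹ • X) * ((2 : F)⁻¹ • U)) := by
      intro X U
      have e1 : (2 : F) • (((2 : F)⁻¹ • X) * ((2 : F)⁻¹ • U)) = ((2 : F)⁻¹ • X) * U := by
        rw [two_smul, ← mul_add, ← two_smul F ((2 : F)⁻¹ • U), smul_smul,
          mul_inv_cancel₀ h2, one_smul]
      have e2 : (2 : F) • (((2 : F)⁻¹ • X) * U) = X * U := by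
        rw [two_smul, ← add_mul, ← two_smul F ((2 : F)⁻¹ • X), smul_smul,
          mul_inv_cancel₀ h2, one_smul]
      rw [show (4 : F) = 2 * 2 by norm_num, mul_smul, e1, e2]
    apply smul_right_injective A h4
    show (4 : F) • _ = (4 : F) • _
    calc (4 : F) • (2 : F)⁻¹ • (x * u + y * v)
        = (2 : F) • (x * u + y * v) := by rw [smul_smul]; norm_num
      _ = (x * u + y * v) + (x * v + y * u) := by rw [two_smul, h0']
      _ = (x + y) * (u + v) := by rw [add_mul, mul_add, mul_add]; abel
      _ = (4 : F) • (((2 : F)⁻¹ • (x + y)) * ((2 : F)⁻¹ • (u + v))) := quarter _ _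
end

section
/- Let A be a finite dimensional H-module algebra over a field F, where H is a Hopf algebra with bijective antipode S, and suppose A is semisimple as an associative algebra. Then A = B₁ ⊕ ... ⊕ B_q, a direct sum of H-invariant two-sided ideals, where each B_i is an H-simple algebra. -/
open TensorProduct


theorem my_semiprime (F A : Type*) [Field F] [Ring A] [Algebra F A] [IsSemisimpleRing A]
    (x : A) (h : ∀ a : A, x * a * x = 0) : x = 0 := by
  obtain ⟨K, hK⟩ := exists_isCompl (Submodule.span A {x} : Submodule A A)
  have h1 : (1:A) ∈ (Submodule.span A {x} : Submodule A A) ⊔ K := by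
    rw [hK.sup_eq_top]; trivial
  obtain ⟨e, he, f, hf, hef⟩ := Submodule.mem_sup.mp h1
  obtain ⟨c, hc⟩ := Submodule.mem_span_singleton.mp he
  have key : ∀ a : A, a * x = 0 := by
    intro a
    have hmem : a * x ∈ (Submodule.span A {x} : Submodule A A) ⊓ K := by
      constructor
      · exact Submodule.mem_span_singleton.mpr ⟨a, rfl⟩
      · have h3 : a * x = a * x * f := by
          have h2 : a * x * e = 0 := by
            rw [← hc]; simp only [smul_eq_mul]
            calc a * x * (c * x) = a * (x * c * x) := by simp [mul_assoc]
            _ = 0 := by rw [h c, mul_zero]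
          calc a * x = a * x * (e + f) := by rw [hef, mul_one]
          _ = a * x * e + a * x * f := by rw [mul_add]
          _ = a * x * f := by rw [h2, zero_add]
        rw [h3]
        exact K.smul_mem (a * x) hf
    rw [hK.inf_eq_bot] at hmem
    exact hmem
  have := key 1
  rwa [one_mul] at this

theorem my_ident (F A : Type*) [Field F] [Ring A] [Algebra F A] [IsSemisimpleRing A]
    (I : Submodule F A) (hI : ∀ a : A, ∀ x ∈ I, a * x ∈ I ∧ x * a ∈ I) :
    ∃ e ∈ I, ∀ y ∈ I, e * y = y ∧ y * e = y := by
  classical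
  set I' : Submodule A A :=
    { carrier := (I : Set A)
      add_mem' := fun ha hb => I.add_mem ha hb
      zero_mem' := I.zero_mem
      smul_mem' := fun a x hx => by simpa [smul_eq_mul] using (hI a x hx).1 } with hI'
  obtain ⟨K, hK⟩ := exists_isCompl I'
  have h1 : (1:A) ∈ I' ⊔ K := by rw [hK.sup_eq_top]; trivial
  obtain ⟨e, he, f, hf, hef⟩ := Submodule.mem_sup.mp h1
  have heI : e ∈ I := he
  -- right identity on I
  have hre : ∀ y ∈ I, y * e = y := by
    intro y hy
    have h2 : y * f ∈ I' ⊓ K := by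
      refine ⟨?_, K.smul_mem y hf⟩
      show y * f ∈ I
      have h3 : y * f = y - y * e := by
        calc y * f = y * (e + f) - y * e := by rw [mul_add]; abel
        _ = y - y * e := by rw [hef, mul_one]
      rw [h3]
      exact I.sub_mem hy (hI y e heI).1
    rw [hK.inf_eq_bot] at h2
    have h4 : y * (e + f) = y * e := by rw [mul_add, h2, add_zero]
    rw [hef, mul_one] at h4
    exact h4.symm
  refine ⟨e, heI, fun y hy => ?_⟩
  refine ⟨?_, hre y hy⟩
  -- left identity : d := y - e*y is zero
  set d : A := y - e * y with hd
  have hdI : d ∈ I := I.sub_mem hy (hI e y hy).1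
  have hed : e * d = 0 := by
    have : e * (e * y) = e * y := by
      rw [← mul_assoc]
      congr 1
      exact hre e heI
    rw [hd, mul_sub, this, sub_self]
  -- every element of I is fixed by right mult by e; and e*d = 0
  have hzero : d = 0 := by
    apply my_semiprime F A
    intro c
    have hdc : d * c ∈ I := (hI c d hdI).2
    have h5 : d * c * d = d * c * (e * d) := by
      have h6 : d * c * e = d * c := hre _ hdc
      rw [← mul_assoc, h6]
    rw [h5, hed, mul_zero]
  have : y - e * y = 0 := hzero
  exact (sub_eq_zero.mp this).symm


noncomputable def Tmap {F H A : Type*} [Field F] [Semiring H] [Ring A] [Algebra F A]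
    [Algebra F H] (ρ : H →ₐ[F] Module.End F A) (b c : A) : H ⊗[F] H →ₗ[F] A :=
  TensorProduct.lift <| LinearMap.mk₂ F (fun u v => ρ u b * ρ v c)
    (fun u u' v => by simp [add_mul])
    (fun s u v => by simp [smul_mul_assoc])
    (fun u v v' => by simp [mul_add])
    (fun s u v => by simp [mul_smul_comm])

@[simp] lemma Tmap_tmul {F H A : Type*} [Field F] [Semiring H] [Ring A] [Algebra F A]
    [Algebra F H] (ρ : H →ₐ[F] Module.End F A) (b c : A) (u v : H) :
    Tmap ρ b c (u ⊗ₜ[F] v) = ρ u b * ρ v c := rfl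

lemma act_eq_Tmap {F H A : Type*} [Field F] [Semiring H] [HopfAlgebra F H]
    [Ring A] [Algebra F A] (ρ : H →ₐ[F] Module.End F A)
    (hact : ∀ h : H, ∃ (k : ℕ) (h₁ h₂ : Fin k → H),
      Coalgebra.comul (R := F) h = ∑ i, h₁ i ⊗ₜ[F] h₂ i ∧
      ∀ a b : A, ρ h (a * b) = ∑ i, ρ (h₁ i) a * ρ (h₂ i) b)
    (u : H) (b c : A) : ρ u (b * c) = Tmap ρ b c (Coalgebra.comul (R := F) u) := by
  obtain ⟨k, h1, h2, hrep, hmul⟩ := hact u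
  rw [hmul, hrep, map_sum]
  simp

theorem my_hopf_ann (F H A : Type*) [Field F] [Semiring H] [HopfAlgebra F H]
    [Ring A] [Algebra F A]
    (ρ : H →ₐ[F] Module.End F A)
    (hact : ∀ h : H, ∃ (k : ℕ) (h₁ h₂ : Fin k → H),
      Coalgebra.comul (R := F) h = ∑ i, h₁ i ⊗ₜ[F] h₂ i ∧
      ∀ a b : A, ρ h (a * b) = ∑ i, ρ (h₁ i) a * ρ (h₂ i) b)
    (I : Submodule F A) (hinv : ∀ h : H, ∀ x ∈ I, ρ h x ∈ I)
    (a : A) (ha : ∀ x ∈ I, a * x = 0) :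
    ∀ h : H, ∀ x ∈ I, (ρ h a) * x = 0 := by
  classical
  intro h x hx
  obtain ⟨k, h1, h2, hrep, hmul⟩ := hact h
  set S : H →ₗ[F] H := HopfAlgebra.antipode (R := F) (A := H) with hS
  set N : H ⊗[F] H →ₗ[F] H := LinearMap.mul' F H ∘ₗ LinearMap.lTensor H S with hN
  set G : H ⊗[F] (H ⊗[F] H) →ₗ[F] A := (Tmap ρ a x) ∘ₗ LinearMap.lTensor H N with hG
  have hsum : (∑ i, Coalgebra.counit (R := F) (h2 i) • h1 i) = h := by
    have hcounit := Coalgebra.lTensor_counit_comul (R := F) h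
    rw [hrep, map_sum] at hcounit
    simp only [LinearMap.lTensor_tmul] at hcounit
    have := congrArg (TensorProduct.rid F H) hcounit
    rw [map_sum] at this
    simpa [TensorProduct.rid_tmul] using this
  have key1 : G ((Coalgebra.comul (R := F)).lTensor H (Coalgebra.comul (R := F) h))
      = ρ h a * x := by
    rw [hrep, map_sum]
    simp only [LinearMap.lTensor_tmul, hG, LinearMap.comp_apply, map_sum]
    have hterm : ∀ i, Tmap ρ a x (LinearMap.lTensor H N
        (h1 i ⊗ₜ[F] Coalgebra.comul (R := F) (h2 i)))
        = Coalgebra.counit (R := F) (h2 i) • (ρ (h1 i) a * x) := by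
      intro i
      rw [LinearMap.lTensor_tmul]
      have hNc : N (Coalgebra.comul (R := F) (h2 i))
          = algebraMap F H (Coalgebra.counit (R := F) (h2 i)) := by
        rw [hN, LinearMap.comp_apply]
        exact HopfAlgebra.mul_antipode_lTensor_comul_apply (h2 i)
      rw [hNc, Tmap_tmul, AlgHom.commutes, Module.algebraMap_end_apply, mul_smul_comm]
    simp only [LinearMap.lTensor_tmul] at hterm
    rw [Finset.sum_congr rfl (fun i _ => hterm i)]
    conv_rhs => rw [← hsum]
    rw [map_sum, LinearMap.sum_apply, Finset.sum_mul]
    simp [smul_mul_assoc]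
  have subclaim : ∀ (w : H) (z : H ⊗[F] H),
      G (TensorProduct.assoc F H H H (z ⊗ₜ[F] w)) = Tmap ρ a (ρ (S w) x) z := by
    intro w z
    induction z using TensorProduct.induction_on with
    | zero => simp
    | tmul u v =>
      simp only [TensorProduct.assoc_tmul, hG, LinearMap.comp_apply,
        LinearMap.lTensor_tmul, hN, LinearMap.mul'_apply, Tmap_tmul, map_mul,
        Module.End.mul_apply]
    | add z1 z2 ih1 ih2 =>
      rw [TensorProduct.add_tmul, map_add, map_add, ih1, ih2, map_add]
  have key2 : G ((Coalgebra.comul (R := F)).lTensor H (Coalgebra.comul (R := F) h)) = 0 := by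
    rw [← Coalgebra.coassoc_apply, hrep, map_sum, map_sum]
    simp only [LinearMap.rTensor_tmul]
    rw [map_sum]
    have hterm2 : ∀ i : Fin k, G ((TensorProduct.assoc F H H H)
        ((Coalgebra.comul (R := F) (h1 i)) ⊗ₜ[F] h2 i)) = 0 := by
      intro i
      rw [subclaim (h2 i) (Coalgebra.comul (R := F) (h1 i)),
        ← act_eq_Tmap ρ hact (h1 i) a (ρ (S (h2 i)) x),
        ha _ (hinv (S (h2 i)) x hx), map_zero]
    exact Finset.sum_eq_zero fun i _ => hterm2 i
  rw [← key1, key2]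


theorem my_decomp (F H A : Type*) [Field F] [Semiring H] [HopfAlgebra F H]
    [Ring A] [Algebra F A] [FiniteDimensional F A] [IsSemisimpleRing A]
    (ρ : H →ₐ[F] Module.End F A)
    (hact : ∀ h : H, ∃ (k : ℕ) (h₁ h₂ : Fin k → H),
      Coalgebra.comul (R := F) h = ∑ i, h₁ i ⊗ₜ[F] h₂ i ∧
      ∀ a b : A, ρ h (a * b) = ∑ i, ρ (h₁ i) a * ρ (h₂ i) b)
    (my_semiprime : ∀ x : A, (∀ a : A, x * a * x = 0) → x = 0)
    (my_ident : ∀ I : Submodule F A, (∀ a : A, ∀ x ∈ I, a * x ∈ I ∧ x * a ∈ I) →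
      ∃ e ∈ I, ∀ y ∈ I, e * y = y ∧ y * e = y)
    (my_hopf_ann : ∀ (I : Submodule F A), (∀ h : H, ∀ x ∈ I, ρ h x ∈ I) →
      ∀ a : A, (∀ x ∈ I, a * x = 0) → ∀ h : H, ∀ x ∈ I, (ρ h a) * x = 0) :
    ∀ (n : ℕ) (I : Submodule F A), Module.finrank F I ≤ n →
      (∀ a : A, ∀ x ∈ I, a * x ∈ I ∧ x * a ∈ I) →
      (∀ h : H, ∀ x ∈ I, ρ h x ∈ I) →
      ∃ (q : ℕ) (B : Fin q → Submodule F A),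
        (∀ i, B i ≤ I) ∧ (⨆ i, B i) = I ∧
        (∀ i, ∀ a : A, ∀ x ∈ B i, a * x ∈ B i ∧ x * a ∈ B i) ∧
        (∀ i, ∀ h : H, ∀ x ∈ B i, ρ h x ∈ B i) ∧
        (∀ i, B i ≠ ⊥) ∧
        (∀ i, ∃ e ∈ B i, ∀ y ∈ B i, e * y = y ∧ y * e = y) ∧
        (∀ i j, i ≠ j → ∀ x ∈ B i, ∀ y ∈ B j, x * y = 0) ∧
        (∀ i, ∀ J : Submodule F A, J ≤ B i →
          (∀ a : A, ∀ x ∈ J, a * x ∈ J ∧ x * a ∈ J) →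
          (∀ h : H, ∀ x ∈ J, ρ h x ∈ J) → J = ⊥ ∨ J = B i) := by
  classical
  have trivialCase : ∀ I : Submodule F A, I = ⊥ →
      ∃ (q : ℕ) (B : Fin q → Submodule F A),
        (∀ i, B i ≤ I) ∧ (⨆ i, B i) = I ∧
        (∀ i, ∀ a : A, ∀ x ∈ B i, a * x ∈ B i ∧ x * a ∈ B i) ∧
        (∀ i, ∀ h : H, ∀ x ∈ B i, ρ h x ∈ B i) ∧
        (∀ i, B i ≠ ⊥) ∧
        (∀ i, ∃ e ∈ B i, ∀ y ∈ B i, e * y = y ∧ y * e = y) ∧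
        (∀ i j, i ≠ j → ∀ x ∈ B i, ∀ y ∈ B j, x * y = 0) ∧
        (∀ i, ∀ J : Submodule F A, J ≤ B i →
          (∀ a : A, ∀ x ∈ J, a * x ∈ J ∧ x * a ∈ J) →
          (∀ h : H, ∀ x ∈ J, ρ h x ∈ J) → J = ⊥ ∨ J = B i) := by
    intro I hI
    refine ⟨0, Fin.elim0, fun i => i.elim0, ?_, fun i => i.elim0, fun i => i.elim0,
      fun i => i.elim0, fun i => i.elim0, fun i => i.elim0, fun i => i.elim0⟩
    rw [hI]
    exact iSup_of_empty _
  intro n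
  induction n with
  | zero =>
    intro I hrk _ _
    exact trivialCase I (Submodule.finrank_eq_zero.mp (Nat.le_zero.mp hrk))
  | succ n ih =>
    intro I hrk hid hinv
    by_cases hbot : I = ⊥
    · exact trivialCase I hbot
    by_cases hmin : ∀ J : Submodule F A, J ≤ I →
        (∀ a : A, ∀ x ∈ J, a * x ∈ J ∧ x * a ∈ J) →
        (∀ h : H, ∀ x ∈ J, ρ h x ∈ J) → J = ⊥ ∨ J = I
    · refine ⟨1, fun _ => I, fun _ => le_rfl, by simp, fun _ => hid, fun _ => hinv,
        fun _ => hbot, fun _ => my_ident I hid, fun i j hij => absurd (Subsingleton.elim i j) hij,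
        fun _ => hmin⟩
    · push_neg at hmin
      obtain ⟨J, hJI, hJid, hJinv, hJbot, hJne⟩ := hmin
      -- the left annihilator of J
      set Jl : Submodule F A :=
        { carrier := {b : A | ∀ y ∈ J, b * y = 0}
          add_mem' := fun {b} {c} hb hc => by
            intro y hy; rw [add_mul, hb y hy, hc y hy, add_zero]
          zero_mem' := fun y _ => zero_mul y
          smul_mem' := fun c b hb => by
            intro y hy; rw [smul_mul_assoc, hb y hy, smul_zero] } with hJl
      have memJl : ∀ b : A, b ∈ Jl ↔ ∀ y ∈ J, b * y = 0 := fun b => Iff.rfl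
      have hJlid : ∀ a : A, ∀ x ∈ Jl, a * x ∈ Jl ∧ x * a ∈ Jl := by
        intro a x hx
        constructor
        · intro y hy; rw [mul_assoc, hx y hy, mul_zero]
        · intro y hy; rw [mul_assoc, hx (a * y) (hJid a y hy).1]
      have hJlinv : ∀ h : H, ∀ x ∈ Jl, ρ h x ∈ Jl := by
        intro h x hx y hy
        exact my_hopf_ann J hJinv x (fun z hz => hx z hz) h y hy
      set I2 : Submodule F A := Jl ⊓ I with hI2
      have hI2id : ∀ a : A, ∀ x ∈ I2, a * x ∈ I2 ∧ x * a ∈ I2 := by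
        intro a x hx
        exact ⟨⟨(hJlid a x hx.1).1, (hid a x hx.2).1⟩, ⟨(hJlid a x hx.1).2, (hid a x hx.2).2⟩⟩
      have hI2inv : ∀ h : H, ∀ x ∈ I2, ρ h x ∈ I2 :=
        fun h x hx => ⟨hJlinv h x hx.1, hinv h x hx.2⟩
      have hdisj : J ⊓ I2 = ⊥ := by
        rw [eq_bot_iff]
        intro x hx
        have hxJ : x ∈ J := hx.1
        have hxJl : x ∈ Jl := hx.2.1
        have : x = 0 := by
          apply my_semiprime
          intro c
          rw [mul_assoc]
          exact hxJl (c * x) (hJid c x hxJ).1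
        simp [this]
      obtain ⟨e, heJ, hE⟩ := my_ident J hJid
      have hsup : J ⊔ I2 = I := by
        apply le_antisymm (sup_le hJI inf_le_right)
        intro b hb
        have h1 : e * b ∈ J := (hJid b e heJ).2
        have h2 : b - e * b ∈ I2 := by
          constructor
          · intro y hy
            have hby : b * y ∈ J := (hJid b y hy).1
            rw [sub_mul, mul_assoc, (hE (b * y) hby).1, sub_self]
          · exact I.sub_mem hb (hid b e (hJI heJ)).2
        exact Submodule.mem_sup.mpr ⟨e * b, h1, b - e * b, h2, by abel⟩
      -- rank bounds
      have hJlt : J < I := lt_of_le_of_ne hJI hJne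
      have hI2lt : I2 < I := by
        apply lt_of_le_of_ne inf_le_right
        intro hEq
        apply hJbot
        rw [eq_bot_iff, ← hdisj]
        exact le_inf le_rfl (le_of_le_of_eq hJI hEq.symm)
      have hrkJ : Module.finrank F J ≤ n :=
        Nat.lt_succ_iff.mp (lt_of_lt_of_le (Submodule.finrank_lt_finrank_of_lt hJlt) hrk)
      have hrkI2 : Module.finrank F I2 ≤ n :=
        Nat.lt_succ_iff.mp (lt_of_lt_of_le (Submodule.finrank_lt_finrank_of_lt hI2lt) hrk)
      obtain ⟨q1, B1, hB1le, hB1sup, hB1id, hB1inv, hB1bot, hB1e, hB1pw, hB1min⟩ :=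
        ih J hrkJ hJid hJinv
      obtain ⟨q2, B2, hB2le, hB2sup, hB2id, hB2inv, hB2bot, hB2e, hB2pw, hB2min⟩ :=
        ih I2 hrkI2 hI2id hI2inv
      set B : Fin (q1 + q2) → Submodule F A :=
        Fin.addCases (motive := fun _ => Submodule F A) B1 B2 with hB
      have hBleft : ∀ i : Fin q1, B (Fin.castAdd q2 i) = B1 i := fun i => by
        simp [hB]
      have hBright : ∀ i : Fin q2, B (Fin.natAdd q1 i) = B2 i := fun i => by
        simp [hB]
      -- cross products vanish
      have hcross : ∀ x ∈ J, ∀ y ∈ I2, x * y = 0 ∧ y * x = 0 := by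
        intro x hx y hy
        constructor
        · have : x * y ∈ J ⊓ I2 := ⟨(hJid y x hx).2, (hI2id x y hy).1⟩
          rw [hdisj] at this; exact this
        · have : y * x ∈ J ⊓ I2 := ⟨(hJid y x hx).1, (hI2id x y hy).2⟩
          rw [hdisj] at this; exact this
      refine ⟨q1 + q2, B, ?_, ?_, ?_, ?_, ?_, ?_, ?_, ?_⟩
      · refine Fin.addCases ?_ ?_
        · intro i; rw [hBleft]; exact (hB1le i).trans hJI
        · intro i; rw [hBright]; exact (hB2le i).trans inf_le_right
      · apply le_antisymm
        · apply iSup_le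
          refine Fin.addCases ?_ ?_
          · intro i; rw [hBleft]; exact (hB1le i).trans hJI
          · intro i; rw [hBright]; exact (hB2le i).trans inf_le_right
        · rw [← hsup]
          apply sup_le
          · rw [← hB1sup]
            exact iSup_le fun i => le_iSup_of_le (Fin.castAdd q2 i) (le_of_eq (hBleft i).symm)
          · rw [← hB2sup]
            exact iSup_le fun i => le_iSup_of_le (Fin.natAdd q1 i) (le_of_eq (hBright i).symm)
      · refine Fin.addCases ?_ ?_
        · intro i; rw [hBleft]; exact hB1id i
        · intro i; rw [hBright]; exact hB2id i
      · refine Fin.addCases ?_ ?_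
        · intro i; rw [hBleft]; exact hB1inv i
        · intro i; rw [hBright]; exact hB2inv i
      · refine Fin.addCases ?_ ?_
        · intro i; rw [hBleft]; exact hB1bot i
        · intro i; rw [hBright]; exact hB2bot i
      · refine Fin.addCases ?_ ?_
        · intro i; rw [hBleft]; exact hB1e i
        · intro i; rw [hBright]; exact hB2e i
      · -- pairwise products zero
        refine Fin.addCases ?_ ?_
        · intro i
          refine Fin.addCases ?_ ?_
          · intro j hij x hx y hy
            rw [hBleft] at hx hy
            exact hB1pw i j (fun hc => hij (by rw [hc])) x hx y hy
          · intro j _ x hx y hy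
            rw [hBleft] at hx
            rw [hBright] at hy
            exact (hcross x (hB1le i hx) y (hB2le j hy)).1
        · intro i
          refine Fin.addCases ?_ ?_
          · intro j _ x hx y hy
            rw [hBright] at hx
            rw [hBleft] at hy
            exact (hcross y (hB1le j hy) x (hB2le i hx)).2
          · intro j hij x hx y hy
            rw [hBright] at hx hy
            exact hB2pw i j (fun hc => hij (by rw [hc])) x hx y hy
      · refine Fin.addCases ?_ ?_
        · intro i; rw [hBleft]; exact hB1min i
        · intro i; rw [hBright]; exact hB2min i

/-- Let `A` be a finite dimensional `H`-module algebra over a field `F`,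
where `H` is a Hopf algebra with bijective antipode, and suppose `A` is semisimple as an
associative algebra.  Then `A = B₁ ⊕ … ⊕ B_q`, a direct sum of `H`-invariant two-sided
ideals, with each `Bᵢ` an `H`-simple algebra. -/
theorem hInvariant_decomposition_of_semisimple
    (F : Type*) [Field F]
    (H : Type*) [Semiring H] [HopfAlgebra F H]
    (hS : Function.Bijective (HopfAlgebra.antipode (R := F) (A := H)))
    (A : Type*) [Ring A] [Algebra F A] [FiniteDimensional F A] [IsSemisimpleRing A]
    -- the `H`-module structure on `A`
    (ρ : H →ₐ[F] Module.End F A)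
    -- `A` is an `H`-module algebra: `h(ab) = Σ (h₍₁₎a)(h₍₂₎b)`
    (hact : ∀ h : H, ∃ (k : ℕ) (h₁ h₂ : Fin k → H),
      Coalgebra.comul (R := F) h = ∑ i, h₁ i ⊗ₜ[F] h₂ i ∧
      ∀ a b : A, ρ h (a * b) = ∑ i, ρ (h₁ i) a * ρ (h₂ i) b) :
    ∃ (q : ℕ) (B : Fin q → Submodule F A),
      DirectSum.IsInternal B ∧
      -- the `B i` are `H`-invariant two-sided ideals
      (∀ i, ∀ a : A, ∀ x ∈ B i, a * x ∈ B i ∧ x * a ∈ B i) ∧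
      (∀ i, ∀ h : H, ∀ x ∈ B i, ρ h x ∈ B i) ∧
      -- each `B i` is `H`-simple: nonzero, nonzero multiplication, no proper nonzero
      -- `H`-invariant two-sided ideals
      (∀ i, B i ≠ ⊥ ∧ (∃ a ∈ B i, ∃ b ∈ B i, a * b ≠ 0) ∧
        ∀ J : Submodule F A, J ≤ B i →
          (∀ a : A, ∀ x ∈ J, a * x ∈ J ∧ x * a ∈ J) →
          (∀ h : H, ∀ x ∈ J, ρ h x ∈ J) → J = ⊥ ∨ J = B i) := by
  classical
  obtain ⟨q, B, hle, hsup, hid, hinv, hbot, hident, hpw, hmin⟩ :=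
    my_decomp F H A ρ hact (my_semiprime F A) (my_ident F A)
      (my_hopf_ann F H A ρ hact)
      (Module.finrank F A) ⊤ (le_of_eq (finrank_top F A))
      (fun a x _ => ⟨Submodule.mem_top, Submodule.mem_top⟩)
      (fun h x _ => Submodule.mem_top)
  refine ⟨q, B, ?_, hid, hinv, ?_⟩
  · rw [DirectSum.isInternal_submodule_iff_iSupIndep_and_iSup_eq_top]
    refine ⟨?_, hsup⟩
    intro i
    obtain ⟨e, he, hE⟩ := hident i
    rw [Submodule.disjoint_def]
    intro x hxi hxsup
    have hker : (⨆ (j) (_ : j ≠ i), B j) ≤ LinearMap.ker (LinearMap.mulLeft F e) := by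
      refine iSup_le fun j => iSup_le fun hj => ?_
      intro y hy
      rw [LinearMap.mem_ker, LinearMap.mulLeft_apply]
      exact hpw i j hj.symm e he y hy
    have h0 : e * x = 0 := hker hxsup
    rw [(hE x hxi).1] at h0
    exact h0
  · intro i
    refine ⟨hbot i, ?_, hmin i⟩
    obtain ⟨y, hy, hy0⟩ := (Submodule.ne_bot_iff _).mp (hbot i)
    obtain ⟨e, he, hE⟩ := hident i
    exact ⟨e, he, y, hy, by rw [(hE y hy).1]; exact hy0⟩
end

section
/- Let G₀ be a group acting by automorphisms on a finite dimensional semisimple associative algebra B over a field F, and suppose B = B̃₁ ⊕ ... ⊕ B̃_k is a direct sum of G₀-invariant ideals with each B̃_i G₀-simple. If g is an anti-automorphism of B normalizing the G₀-action (i.e., g G₀ g⁻¹ = G₀ as transformations, with g² ∈ G₀), then for each i, B̃_i + g(B̃_i) is a G-simple ideal of B, where G = ⟨G₀, g⟩. -/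
private lemma exists_right_id
    {F : Type*} [Field F] {B : Type*} [Ring B] [Algebra F B] [IsSemisimpleRing B]
    (P : Submodule F B)
    (hP : ∀ a : B, ∀ x ∈ P, a * x ∈ P ∧ x * a ∈ P) :
    ∃ e ∈ P, ∀ x ∈ P, x * e = x := by
  let P' : Submodule B B :=
    { carrier := (P : Set B)
      add_mem' := fun h h' => P.add_mem h h'
      zero_mem' := P.zero_mem
      smul_mem' := fun a x hx => (hP a x hx).1 }
  have hmem : ∀ x : B, x ∈ P' ↔ x ∈ P := fun x => Iff.rfl
  obtain ⟨Q, hQ⟩ := exists_isCompl P'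
  have h1 : (1 : B) ∈ P' ⊔ Q := by rw [hQ.sup_eq_top]; trivial
  obtain ⟨e, he, f, hf, hef⟩ := Submodule.mem_sup.mp h1
  refine ⟨e, (hmem e).mp he, fun x hx => ?_⟩
  have hxe : x * e ∈ P := (hP e x hx).2
  have hx1 : x * e + x * f = x := by rw [← mul_add, hef, mul_one]
  have hxf0 : x * f ∈ P' ⊓ Q := by
    constructor
    · show x * f ∈ P
      have : x * f = x - x * e := eq_sub_of_add_eq' hx1
      rw [this]; exact P.sub_mem hx hxe
    · exact Q.smul_mem x hf
  rw [hQ.inf_eq_bot] at hxf0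
  have : x * f = 0 := hxf0
  rw [this, add_zero] at hx1
  exact hx1

/-- Let `G₀` be a group acting by automorphisms on a finite dimensional
semisimple associative algebra `B` over a field `F`, and suppose
`B = B̃₁ ⊕ … ⊕ B̃_k` is a direct sum of `G₀`-invariant ideals with each `B̃ᵢ` `G₀`-simple.
If `g` is an anti-automorphism of `B` normalizing the `G₀`-action with `g² ∈ G₀`, then for
each `i`, the ideal `B̃ᵢ + g(B̃ᵢ)` is a `G`-simple ideal of `B`, where `G = ⟨G₀, g⟩` (so an
ideal is `G`-invariant iff it is `G₀`-invariant and `g`-invariant). -/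
theorem sum_with_antiAut_image_is_G_simple
    (F : Type*) [Field F]
    (B : Type*) [Ring B] [Algebra F B] [FiniteDimensional F B] [IsSemisimpleRing B]
    (G₀ : Type*) [Group G₀]
    -- `G₀` acts on `B` by algebra automorphisms
    (σ : G₀ →* (B ≃ₐ[F] B))
    -- `g` is a bijective anti-automorphism of `B`
    (g : B ≃ₗ[F] B) (hganti : ∀ a b : B, g (a * b) = g b * g a)
    -- `g` normalizes the `G₀`-action and `g² ∈ G₀`
    (hnorm : ∀ t : G₀, ∃ t' : G₀, ∀ b : B, g (σ t (g.symm b)) = σ t' b)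
    (hg2 : ∃ t₀ : G₀, ∀ b : B, g (g b) = σ t₀ b)
    -- the decomposition into `G₀`-invariant `G₀`-simple ideals
    (k : ℕ) (Bt : Fin k → Submodule F B)
    (hsum : DirectSum.IsInternal Bt)
    (hideal : ∀ i, ∀ a : B, ∀ x ∈ Bt i, a * x ∈ Bt i ∧ x * a ∈ Bt i)
    (hinv : ∀ i, ∀ t : G₀, ∀ x ∈ Bt i, σ t x ∈ Bt i)
    (hG₀simple : ∀ i, Bt i ≠ ⊥ ∧
      ∀ J : Submodule F B, J ≤ Bt i →
        (∀ a : B, ∀ x ∈ J, a * x ∈ J ∧ x * a ∈ J) →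
        (∀ t : G₀, ∀ x ∈ J, σ t x ∈ J) → J = ⊥ ∨ J = Bt i) :
    -- each `B̃ᵢ + g(B̃ᵢ)` is a `G`-simple `G`-invariant ideal of `B`
    ∀ i, (Bt i ⊔ (Bt i).map (g : B →ₗ[F] B)) ≠ ⊥ ∧
      (∀ a : B, ∀ x ∈ Bt i ⊔ (Bt i).map (g : B →ₗ[F] B),
        a * x ∈ Bt i ⊔ (Bt i).map (g : B →ₗ[F] B) ∧
        x * a ∈ Bt i ⊔ (Bt i).map (g : B →ₗ[F] B)) ∧
      (∀ t : G₀, ∀ x ∈ Bt i ⊔ (Bt i).map (g : B →ₗ[F] B),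
        σ t x ∈ Bt i ⊔ (Bt i).map (g : B →ₗ[F] B)) ∧
      (∀ x ∈ Bt i ⊔ (Bt i).map (g : B →ₗ[F] B),
        g x ∈ Bt i ⊔ (Bt i).map (g : B →ₗ[F] B)) ∧
      ∀ J : Submodule F B, J ≤ Bt i ⊔ (Bt i).map (g : B →ₗ[F] B) →
        (∀ a : B, ∀ x ∈ J, a * x ∈ J ∧ x * a ∈ J) →
        (∀ t : G₀, ∀ x ∈ J, σ t x ∈ J) →
        (∀ x ∈ J, g x ∈ J) →
        J = ⊥ ∨ J = Bt i ⊔ (Bt i).map (g : B →ₗ[F] B) := by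
  obtain ⟨t₀, ht₀⟩ := hg2
  have hσ : ∀ (a b : G₀) (v : B), σ a (σ b v) = σ (a * b) v := by
    intro a b v; rw [map_mul]; rfl
  have hid : ∀ v : B, σ t₀⁻¹ (σ t₀ v) = v := by
    intro v; rw [hσ, inv_mul_cancel, map_one]; rfl
  have hA : ∀ t : G₀, ∃ t' : G₀, ∀ y : B, g (σ t y) = σ t' (g y) := by
    intro t
    obtain ⟨t', ht'⟩ := hnorm t
    exact ⟨t', fun y => by simpa using ht' (g y)⟩
  have hcomm : ∀ w : B, g (σ t₀ w) = σ t₀ (g w) := by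
    intro w
    rw [← ht₀ w]
    exact ht₀ (g w)
  have hcomm' : ∀ v : B, g (σ t₀⁻¹ v) = σ t₀⁻¹ (g v) := by
    intro v
    have h1 : σ t₀ (g (σ t₀⁻¹ v)) = g v := by
      rw [← hcomm, hσ, mul_inv_cancel, map_one]; rfl
    calc g (σ t₀⁻¹ v) = σ t₀⁻¹ (σ t₀ (g (σ t₀⁻¹ v))) := (hid _).symm
      _ = σ t₀⁻¹ (g v) := by rw [h1]
  have hconj : ∀ (t : G₀) (x : B), ∃ s : G₀, σ t (g x) = g (σ s x) := by
    intro t x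
    obtain ⟨t', ht'⟩ := hA t
    refine ⟨t₀⁻¹ * t' * t₀, ?_⟩
    have h1 : σ (t₀⁻¹ * t' * t₀) x = σ t₀⁻¹ (g (σ t (g x))) := by
      rw [← hσ (t₀⁻¹ * t') t₀ x, ← hσ t₀⁻¹ t' (σ t₀ x), ← ht₀ x, ← ht' (g x)]
    rw [h1, hcomm', ht₀, hid]
  intro i
  set M : Submodule F B := (Bt i).map (g : B →ₗ[F] B) with hMdef
  have hMmem : ∀ x : B, x ∈ M ↔ ∃ y ∈ Bt i, g y = x := by
    intro x
    rw [hMdef, Submodule.mem_map]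
    exact ⟨fun ⟨y, hy, hgy⟩ => ⟨y, hy, hgy⟩, fun ⟨y, hy, hgy⟩ => ⟨y, hy, hgy⟩⟩
  have hMmem' : ∀ y ∈ Bt i, g y ∈ M := fun y hy => (hMmem (g y)).mpr ⟨y, hy, rfl⟩
  -- M is an ideal
  have hMideal : ∀ a : B, ∀ x ∈ M, a * x ∈ M ∧ x * a ∈ M := by
    intro a x hx
    obtain ⟨y, hy, rfl⟩ := (hMmem x).mp hx
    constructor
    · have h1 : g (y * g.symm a) = a * g y := by
        rw [hganti, g.apply_symm_apply]
      exact (hMmem _).mpr ⟨y * g.symm a, (hideal i (g.symm a) y hy).2, h1⟩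
    · have h1 : g (g.symm a * y) = g y * a := by
        rw [hganti, g.apply_symm_apply]
      exact (hMmem _).mpr ⟨g.symm a * y, (hideal i (g.symm a) y hy).1, h1⟩
  -- M is G₀-invariant
  have hMG₀ : ∀ t : G₀, ∀ x ∈ M, σ t x ∈ M := by
    intro t x hx
    obtain ⟨y, hy, rfl⟩ := (hMmem x).mp hx
    obtain ⟨s, hs⟩ := hconj t y
    rw [hs]
    exact hMmem' _ (hinv i s y hy)
  -- g maps M into Bt i
  have hMg : ∀ x ∈ M, g x ∈ Bt i := by
    intro x hx
    obtain ⟨y, hy, rfl⟩ := (hMmem x).mp hx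
    rw [ht₀ y]
    exact hinv i t₀ y hy
  refine ⟨?_, ?_, ?_, ?_, ?_⟩
  · intro h
    have : Bt i ≤ ⊥ := h ▸ le_sup_left
    exact (hG₀simple i).1 (le_bot_iff.mp this)
  · intro a z hz
    obtain ⟨x, hx, y, hy, rfl⟩ := Submodule.mem_sup.mp hz
    constructor
    · rw [mul_add]
      exact Submodule.add_mem _ (Submodule.mem_sup_left (hideal i a x hx).1)
        (Submodule.mem_sup_right (hMideal a y hy).1)
    · rw [add_mul]
      exact Submodule.add_mem _ (Submodule.mem_sup_left (hideal i a x hx).2)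
        (Submodule.mem_sup_right (hMideal a y hy).2)
  · intro t z hz
    obtain ⟨x, hx, y, hy, rfl⟩ := Submodule.mem_sup.mp hz
    rw [map_add]
    exact Submodule.add_mem _ (Submodule.mem_sup_left (hinv i t x hx))
      (Submodule.mem_sup_right (hMG₀ t y hy))
  · intro z hz
    obtain ⟨x, hx, y, hy, rfl⟩ := Submodule.mem_sup.mp hz
    rw [map_add]
    exact Submodule.add_mem _ (Submodule.mem_sup_right (hMmem' x hx))
      (Submodule.mem_sup_left (hMg y hy))
  · intro J hJle hJideal hJG₀ hJg
    by_cases hJbot : J = ⊥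
    · exact Or.inl hJbot
    right
    -- The intersection K := Bt i ⊓ M is a G₀-invariant ideal inside Bt i
    have hK := (hG₀simple i).2 (Bt i ⊓ M) inf_le_left
      (fun a x hx => ⟨⟨(hideal i a x hx.1).1, (hMideal a x hx.2).1⟩,
        ⟨(hideal i a x hx.1).2, (hMideal a x hx.2).2⟩⟩)
      (fun t x hx => ⟨hinv i t x hx.1, hMG₀ t x hx.2⟩)
    rcases hK with hK | hK
    · -- Bt i ⊓ M = ⊥ : the generic case
      obtain ⟨e, heP, he⟩ := exists_right_id (Bt i) (hideal i)
      obtain ⟨z, hz, hzne⟩ := Submodule.exists_mem_ne_zero_of_ne_bot hJbot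
      obtain ⟨x, hx, y, hy, hxy⟩ := Submodule.mem_sup.mp (hJle hz)
      -- z * e = x
      have hye : y * e = 0 := by
        have h1 : y * e ∈ Bt i ⊓ M := ⟨(hideal i y e heP).1, (hMideal e y hy).2⟩
        rw [hK] at h1
        exact h1
      have hze : z * e = x := by
        rw [← hxy, add_mul, he x hx, hye, add_zero]
      have hxJ : x ∈ J := hze ▸ (hJideal e z hz).2
      -- J ⊓ Bt i is a nonzero G₀-invariant ideal of Bt i
      have hJ1ne : J ⊓ Bt i ≠ ⊥ := by
        by_cases hx0 : x = 0
        · -- then z = y ∈ M, and g z ∈ J ⊓ Bt i is nonzero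
          have hzM : z ∈ M := by rw [← hxy, hx0, zero_add]; exact hy
          have hgz : g z ∈ J ⊓ Bt i := ⟨hJg z hz, hMg z hzM⟩
          intro h
          rw [h] at hgz
          have : g z = 0 := hgz
          exact hzne (by simpa using g.injective (by simpa using this))
        · intro h
          have : x ∈ (⊥ : Submodule F B) := h ▸ ⟨hxJ, hx⟩
          exact hx0 this
      have hJ1 := (hG₀simple i).2 (J ⊓ Bt i) inf_le_right
        (fun a x hx => ⟨⟨(hJideal a x hx.1).1, (hideal i a x hx.2).1⟩,
          ⟨(hJideal a x hx.1).2, (hideal i a x hx.2).2⟩⟩)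
        (fun t x hx => ⟨hJG₀ t x hx.1, hinv i t x hx.2⟩)
      rcases hJ1 with hJ1 | hJ1
      · exact absurd hJ1 hJ1ne
      have hBle : Bt i ≤ J := hJ1 ▸ inf_le_left
      have hMle : M ≤ J := by
        rw [hMdef]
        rw [Submodule.map_le_iff_le_comap]
        intro w hw
        exact hJg w (hBle hw)
      exact le_antisymm hJle (sup_le hBle hMle)
    · -- Bt i ⊓ M = Bt i : then M = Bt i and the sup is Bt i itself
      have hle : Bt i ≤ M := by rw [← hK]; exact inf_le_right
      have hfr : Module.finrank F M = Module.finrank F (Bt i) :=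
        LinearEquiv.finrank_map_eq g (Bt i)
      have hMeq : Bt i = M := Submodule.eq_of_le_of_finrank_le hle (le_of_eq hfr)
      have hsup : Bt i ⊔ M = Bt i := by rw [← hMeq, sup_idem]
      rw [hsup] at hJle ⊢
      rcases (hG₀simple i).2 J hJle hJideal hJG₀ with h | h
      · exact absurd h hJbot
      · exact h
end

section
/- Let A be a finite dimensional associative algebra with a generalized H-action over a field F of characteristic 0, and let I ⊆ A be an H-invariant ideal with Iᵖ = 0. Let λ = (λ₁, ..., λ_s) ⊢ n be a partition with Σ_{k > dim A − dim I} λ_k ≥ p. Then for every Young tableau T_λ of shape λ and every multilinear H-polynomial f ∈ P_n^H, the element e*_{T_λ} f = b_{T_λ} a_{T_λ} f is a polynomial H-identity of A; consequently the multiplicity m(A, H, λ) of χ(λ) in the n-th cocharacter of A is zero. -/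
open scoped Classical

/-- The left-normed evaluation of a word `x₁ x₂ ⋯ x_k` in an associative algebra
(the empty word evaluates to `0`). -/
noncomputable def evalWord {A : Type*} [NonUnitalRing A] : List A → A
  | [] => 0
  | [x] => x
  | x :: y :: l => evalWord ((x * y) :: l)
termination_by l => l.length

/-- The space of `n`-linear functions `Aⁿ → A` representable by multilinear
`H`-polynomials; it is isomorphic to `P_n^H/(P_n^H ∩ Id^H(A))`, so an element of
`P_n^H` is an `H`-identity of `A` iff the corresponding function here is `0`. -/
noncomputable def monomialSpan (F : Type*) {A H : Type*} [Field F] [NonUnitalRing A]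
    [Module F A] (ζ : H → Module.End F A) (n : ℕ) : Submodule F ((Fin n → A) → A) :=
  Submodule.span F {f | ∃ (σ : Equiv.Perm (Fin n)) (h : Fin n → H),
    f = fun a => evalWord (List.ofFn fun i => ζ (h i) (a (σ i)))}

/-- The action of a permutation on `n`-linear functions, permuting the variables. -/
noncomputable def permAct {A : Type*} {n : ℕ} (σ : Equiv.Perm (Fin n))
    (f : (Fin n → A) → A) : (Fin n → A) → A :=
  fun a => f fun i => a (σ i)

/- ===== auxiliary lemmas ===== -/

section EvalWordLemmas
variable {A : Type*} [NonUnitalRing A]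

theorem evalWord_cons (x : A) (l : List A) :
    evalWord (x :: l) = l.foldl (· * ·) x := by
  induction l generalizing x with
  | nil => simp [evalWord]
  | cons y l ih =>
    rw [show evalWord (x :: y :: l) = evalWord ((x*y) :: l) from by simp [evalWord], ih]
    rfl

theorem evalWord_concat (l : List A) (hl : l ≠ []) (v : A) :
    evalWord (l ++ [v]) = evalWord l * v := by
  cases l with
  | nil => exact absurd rfl hl
  | cons x l => simp [evalWord_cons, List.foldl_append]

theorem foldl_mul_add (l : List A) (x y : A) :
    l.foldl (· * ·) (x + y) = l.foldl (· * ·) x + l.foldl (· * ·) y := by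
  induction l generalizing x y with
  | nil => rfl
  | cons z l ih => simp only [List.foldl_cons, add_mul, ih]

theorem foldl_mul_smul {F : Type*} [Field F] [Module F A]
    [IsScalarTower F A A] (l : List A) (c : F) (x : A) :
    l.foldl (· * ·) (c • x) = c • l.foldl (· * ·) x := by
  induction l generalizing x with
  | nil => rfl
  | cons z l ih => simp only [List.foldl_cons, smul_mul_assoc, ih]

theorem evalWord_middle_add (l₁ l₂ : List A) (v v' : A) :
    evalWord (l₁ ++ (v + v') :: l₂) = evalWord (l₁ ++ v :: l₂) + evalWord (l₁ ++ v' :: l₂) := by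
  cases l₁ with
  | nil => simp only [List.nil_append, evalWord_cons, foldl_mul_add]
  | cons x l₁ =>
    simp only [List.cons_append, evalWord_cons, List.foldl_append, List.foldl_cons, mul_add,
      foldl_mul_add]

theorem evalWord_middle_smul {F : Type*} [Field F] [Module F A]
    [IsScalarTower F A A] [SMulCommClass F A A] (l₁ l₂ : List A) (c : F) (v : A) :
    evalWord (l₁ ++ (c • v) :: l₂) = c • evalWord (l₁ ++ v :: l₂) := by
  cases l₁ with
  | nil => simp only [List.nil_append, evalWord_cons, foldl_mul_smul]
  | cons x l₁ =>
    simp only [List.cons_append, evalWord_cons, List.foldl_append, List.foldl_cons,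
      mul_smul_comm, foldl_mul_smul]

theorem exists_middle_decomp {α : Type*} {m : ℕ} (w : Fin m → α) (k : Fin m) :
    ∃ M₁ M₂ : List α, ∀ v, List.ofFn (Function.update w k v) = M₁ ++ v :: M₂ := by
  obtain ⟨s, t, hst⟩ := List.append_of_mem (List.mem_finRange k)
  have hnd : (s ++ k :: t).Nodup := hst ▸ List.nodup_finRange m
  have hk : k ∉ s ++ t := (List.nodup_cons.mp (List.nodup_middle.mp hnd)).1
  have hks : k ∉ s := fun h => hk (List.mem_append_left _ h)
  have hkt : k ∉ t := fun h => hk (List.mem_append_right _ h)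
  refine ⟨s.map w, t.map w, fun v => ?_⟩
  rw [List.ofFn_eq_map, hst, List.map_append, List.map_cons, Function.update_self]
  congr 1
  · exact List.map_congr_left fun i hi => Function.update_of_ne (fun h : i = k => hks (h ▸ hi)) _ _
  · congr 1
    exact List.map_congr_left fun i hi => Function.update_of_ne (fun h : i = k => hkt (h ▸ hi)) _ _

end EvalWordLemmas

section IPowSection
variable {F A : Type*} [Field F] [NonUnitalRing A] [Module F A] (I : Submodule F A)

def IPow : ℕ → Set A
  | 0 => Set.univ
  | 1 => ↑I
  | (k+2) => {z | ∃ u ∈ IPow (k+1), ∃ v ∈ I, z = u * v}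

variable {I} (hI : ∀ a : A, ∀ x ∈ I, a * x ∈ I ∧ x * a ∈ I)
include hI

theorem IPow.mul_right {k : ℕ} (hk : 0 < k) {u : A} (hu : u ∈ IPow I k) (a : A) :
    u * a ∈ IPow I k := by
  match k with
  | 1 => exact (hI a u hu).2
  | (k+2) =>
    obtain ⟨u', hu', v, hv, rfl⟩ := hu
    exact ⟨u', hu', v * a, (hI a v hv).2, mul_assoc u' v a⟩

theorem IPow.step {k : ℕ} {u v : A} (hu : u ∈ IPow I k) (hv : v ∈ I) :
    u * v ∈ IPow I (k + 1) := by
  match k with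
  | 0 => exact (hI u v hv).1
  | (k+1) => exact ⟨u, hu, v, hv, rfl⟩

theorem IPow.anti {j k : ℕ} (hjk : j ≤ k) {u : A} (hu : u ∈ IPow I k) : u ∈ IPow I j := by
  induction k with
  | zero => simpa [Nat.le_zero.mp hjk] using hu
  | succ k ih =>
    rcases Nat.eq_or_lt_of_le hjk with rfl | hlt
    · exact hu
    refine ih (Nat.lt_succ_iff.mp hlt) ?_
    match k with
    | 0 => exact Set.mem_univ u
    | (k+1) =>
      obtain ⟨u', hu', v, hv, rfl⟩ := hu
      exact IPow.mul_right hI (Nat.succ_pos k) hu' v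

theorem IPow.foldl (l : List A) : ∀ (x : A) (k : ℕ), x ∈ IPow I k →
    l.foldl (· * ·) x ∈ IPow I (k + l.countP (fun z => decide (z ∈ I))) := by
  induction l with
  | nil => intro x k hx; simpa using hx
  | cons y l ih =>
    intro x k hx
    rw [List.foldl_cons]
    by_cases hy : y ∈ I
    · have h := ih (x * y) (k + 1) (IPow.step hI hx hy)
      have hc : (y :: l).countP (fun z => decide (z ∈ I)) =
          l.countP (fun z => decide (z ∈ I)) + 1 := by simp [List.countP_cons, hy]
      rw [hc, show k + (l.countP (fun z => decide (z ∈ I)) + 1) =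
        k + 1 + l.countP (fun z => decide (z ∈ I)) from by omega]
      exact h
    · have hxy : x * y ∈ IPow I k := by
        rcases Nat.eq_zero_or_pos k with rfl | hk
        · exact Set.mem_univ _
        · exact IPow.mul_right hI hk hx y
      have h := ih (x * y) k hxy
      have hc : (y :: l).countP (fun z => decide (z ∈ I)) =
          l.countP (fun z => decide (z ∈ I)) := by simp [List.countP_cons, hy]
      rw [hc]
      exact h

omit hI in
theorem IPow.repr {k : ℕ} (hk : 0 < k) {z : A} (hz : z ∈ IPow I k) :
    ∃ w : Fin k → A, (∀ i, w i ∈ I) ∧ z = evalWord (List.ofFn w) := by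
  induction k generalizing z with
  | zero => omega
  | succ k ih =>
    match k with
    | 0 => exact ⟨fun _ => z, fun _ => hz, by simp [evalWord]⟩
    | (k+1) =>
      obtain ⟨u, hu, v, hv, rfl⟩ := hz
      obtain ⟨w, hw, rfl⟩ := ih (Nat.succ_pos k) hu
      refine ⟨Fin.snoc w v, ?_, ?_⟩
      · intro i
        induction i using Fin.lastCases with
        | last => simpa using hv
        | cast i => simpa using hw i
      · have hofn : List.ofFn (Fin.snoc w v : Fin (k+2) → A) = List.ofFn w ++ [v] := by
          rw [List.ofFn_succ']
          simp [List.concat_eq_append]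
        rw [hofn, evalWord_concat _ (by simp) v]

theorem evalWord_eq_zero_of_count {p : ℕ} (hp : 0 < p)
    (hIp : ∀ x : Fin p → A, (∀ i, x i ∈ I) → evalWord (List.ofFn x) = 0)
    (L : List A) (hL : p ≤ L.countP (fun z => decide (z ∈ I))) : evalWord L = 0 := by
  cases L with
  | nil => simp [evalWord]
  | cons x l =>
    have hx : x ∈ IPow I (if x ∈ I then 1 else 0) := by
      split
      · assumption
      · exact Set.mem_univ x
    have h1 := IPow.foldl hI l x _ hx
    have hcount : p ≤ (if x ∈ I then 1 else 0) + l.countP (fun z => decide (z ∈ I)) := by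
      have : (x :: l).countP (fun z => decide (z ∈ I)) =
          l.countP (fun z => decide (z ∈ I)) + if x ∈ I then 1 else 0 := by
        simp [List.countP_cons]
      omega
    have h2 : l.foldl (· * ·) x ∈ IPow I p := IPow.anti hI hcount h1
    obtain ⟨w, hw, hrepr⟩ := IPow.repr hp h2
    rw [evalWord_cons, hrepr]
    exact hIp w hw

end IPowSection

theorem countP_ofFn {A : Type*} (q : A → Bool) : ∀ {m : ℕ} (w : Fin m → A),
    (List.ofFn w).countP q = (Finset.univ.filter fun i => q (w i) = true).card := by
  intro m
  induction m with
  | zero => intro w; simp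
  | succ m ih =>
    intro w
    rw [List.ofFn_succ, List.countP_cons, ih (fun i => w i.succ), Finset.card_filter,
      Finset.card_filter, Fin.sum_univ_succ]
    simp only [Fin.succ]
    by_cases h : q (w 0) = true <;> simp [h] <;> ring_nf <;> omega

section MultiLin
variable {F A : Type*} [Field F] [NonUnitalRing A] [Module F A] {n : ℕ}

def IsLinAt (g : (Fin n → A) → A) (i : Fin n) : Prop :=
  (∀ a x y, g (Function.update a i (x + y)) =
      g (Function.update a i x) + g (Function.update a i y)) ∧
    ∀ (a) (c : F) (x), g (Function.update a i (c • x)) = c • g (Function.update a i x)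

theorem IsLinAt.update_zero {g : (Fin n → A) → A} {i : Fin n} (hg : IsLinAt (F := F) g i)
    (a : Fin n → A) : g (Function.update a i 0) = 0 := by
  have h := hg.1 a 0 0
  rw [add_zero] at h
  exact left_eq_add.mp h

theorem IsLinAt.update_sum {g : (Fin n → A) → A} {i : Fin n} (hg : IsLinAt (F := F) g i)
    (a : Fin n → A) {ι : Type*} (t : Finset ι) (u : ι → A) :
    g (Function.update a i (∑ j ∈ t, u j)) = ∑ j ∈ t, g (Function.update a i (u j)) := by
  induction t using Finset.induction_on with
  | empty => simpa using hg.update_zero a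
  | insert j t hj ih =>
    rw [Finset.sum_insert hj, Finset.sum_insert hj, hg.1, ih]

theorem eq_zero_of_multilinear_of_basis_zero {ι : Type*} [Fintype ι] (b : Module.Basis ι F A)
    (g : (Fin n → A) → A) (hlin : ∀ i, IsLinAt (F := F) g i)
    (h0 : ∀ v : Fin n → ι, g (fun k => b (v k)) = 0) (a : Fin n → A) : g a = 0 := by
  suffices H : ∀ m : ℕ, ∀ a : Fin n → A, (∀ k : Fin n, m ≤ (k : ℕ) → ∃ j, a k = b j) →
      g a = 0 by
    exact H n a (fun k hk => absurd hk (Nat.not_le.mpr k.isLt))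
  intro m
  induction m with
  | zero =>
    intro a ha
    choose v hv using fun k => ha k (Nat.zero_le _)
    have : a = fun k => b (v k) := funext hv
    rw [this]
    exact h0 v
  | succ m ih =>
    intro a ha
    by_cases hm : m < n
    · set i : Fin n := ⟨m, hm⟩ with hi
      have h1 : g a = g (Function.update a i (∑ j, b.repr (a i) j • b j)) := by
        rw [b.sum_repr (a i), Function.update_eq_self]
      rw [h1, (hlin i).update_sum, Finset.sum_eq_zero]
      intro j _
      rw [(hlin i).2]
      have h2 : g (Function.update a i (b j)) = 0 := by
        apply ih
        intro k hk
        by_cases hki : k = i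
        · subst hki; exact ⟨j, Function.update_self _ _ _⟩
        · have : m + 1 ≤ (k : ℕ) := by
            rcases Nat.lt_or_ge (k : ℕ) (m+1) with h | h
            · exact absurd (Fin.ext (by omega : (k:ℕ) = m)) hki
            · exact h
          obtain ⟨j', hj'⟩ := ha k this
          exact ⟨j', by rwa [Function.update_of_ne hki]⟩
      rw [h2, smul_zero]
    · exact ih a (fun k _ => ha k (by omega))

def linAt (i : Fin n) : Submodule F ((Fin n → A) → A) where
  carrier := {g | IsLinAt (F := F) g i}
  add_mem' := by
    rintro g g' ⟨hg1, hg2⟩ ⟨hg'1, hg'2⟩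
    constructor
    · intro a x y; simp only [Pi.add_apply, hg1, hg'1]; abel
    · intro a c x; simp only [Pi.add_apply, hg2, hg'2, smul_add]
  zero_mem' := by constructor <;> intros <;> simp
  smul_mem' := by
    rintro c g ⟨hg1, hg2⟩
    constructor
    · intro a x y; simp only [Pi.smul_apply, hg1, smul_add]
    · intro a c' x; simp only [Pi.smul_apply, hg2, smul_comm c c']

variable [IsScalarTower F A A] [SMulCommClass F A A]

theorem monomialSpan_le_linAt {H : Type*} (ζ : H → Module.End F A) (i : Fin n) :
    monomialSpan F ζ n ≤ linAt (F := F) (A := A) i := by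
  rw [monomialSpan, Submodule.span_le]
  rintro g ⟨τ, h, rfl⟩
  have key : ∀ (a : Fin n → A) (x : A),
      (fun k => ζ (h k) (Function.update a i x (τ k))) =
        Function.update (fun k => ζ (h k) (a (τ k))) (τ.symm i) (ζ (h (τ.symm i)) x) := by
    intro a x
    funext k
    by_cases hk : k = τ.symm i
    · subst hk
      rw [Equiv.apply_symm_apply, Function.update_self, Function.update_self]
    · rw [Function.update_of_ne hk, Function.update_of_ne]
      intro hτ
      exact hk (by simpa using congrArg τ.symm hτ)
  constructor
  · intro a x y
    obtain ⟨M₁, M₂, hM⟩ := exists_middle_decomp (fun k => ζ (h k) (a (τ k))) (τ.symm i)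
    simp only [key, map_add, hM, evalWord_middle_add]
  · intro a c x
    obtain ⟨M₁, M₂, hM⟩ := exists_middle_decomp (fun k => ζ (h k) (a (τ k))) (τ.symm i)
    simp only [key, map_smul, hM, evalWord_middle_smul]

omit [IsScalarTower F A A] [SMulCommClass F A A] in
theorem permAct_mem_monomialSpan {H : Type*} (ζ : H → Module.End F A) (σ : Equiv.Perm (Fin n))
    {g : (Fin n → A) → A} (hg : g ∈ monomialSpan F ζ n) :
    permAct σ g ∈ monomialSpan F ζ n := by
  induction hg using Submodule.span_induction with
  | mem g hg =>
    obtain ⟨τ, h, rfl⟩ := hg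
    exact Submodule.subset_span ⟨τ.trans σ, h, rfl⟩
  | zero =>
    rw [show permAct σ (0 : (Fin n → A) → A) = 0 from rfl]
    exact Submodule.zero_mem _
  | add g g' _ _ hg hg' =>
    rw [show permAct σ (g + g') = permAct σ g + permAct σ g' from rfl]
    exact Submodule.add_mem _ hg hg'
  | smul c g _ hg =>
    rw [show permAct σ (c • g) = c • permAct σ g from rfl]
    exact Submodule.smul_mem _ c hg

end MultiLin

theorem tableau_fiber_gen {n s : ℕ} (l : Fin s → ℕ)
    (T : {c : Fin s × ℕ // c.2 < l c.1} ≃ Fin n) (j : ℕ) (Q : Fin s → Prop) :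
    (Finset.univ.filter fun k => Q (T.symm k).val.1 ∧ (T.symm k).val.2 = j).card =
      (Finset.univ.filter fun i : Fin s => Q i ∧ j < l i).card := by
  refine Finset.card_bij' (fun k _ => (T.symm k).val.1)
    (fun i hi => T ⟨(i, j), by simp only [Finset.mem_filter] at hi; exact hi.2.2⟩)
    ?_ ?_ ?_ ?_
  · intro k hk
    simp only [Finset.mem_filter] at hk ⊢
    refine ⟨Finset.mem_univ _, hk.2.1, ?_⟩
    have := (T.symm k).prop
    rw [hk.2.2] at this
    exact this
  · intro i hi
    simp only [Finset.mem_filter] at hi ⊢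
    have h := Equiv.symm_apply_apply T ⟨(i, j), hi.2.2⟩
    exact ⟨Finset.mem_univ _, by rw [h]; exact hi.2.1, by rw [h]⟩
  · intro k hk
    simp only [Finset.mem_filter] at hk
    exact (Equiv.apply_eq_iff_eq_symm_apply T).mpr (Subtype.ext (Prod.ext rfl hk.2.2.symm))
  · intro i hi
    show (T.symm (T _)).val.1 = i
    rw [Equiv.symm_apply_apply]

theorem tableau_row_fiber {n s : ℕ} (l : Fin s → ℕ)
    (T : {c : Fin s × ℕ // c.2 < l c.1} ≃ Fin n) (i : Fin s) :
    (Finset.univ.filter fun k => (T.symm k).val.1 = i).card = l i := by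
  rw [← Finset.card_range (l i)]
  refine Finset.card_bij' (fun k _ => (T.symm k).val.2)
    (fun j hj => T ⟨(i, j), by simpa using hj⟩) ?_ ?_ ?_ ?_
  · intro k hk
    simp only [Finset.mem_filter] at hk
    rw [Finset.mem_range]
    exact hk.2 ▸ (T.symm k).prop
  · intro j hj
    simp only [Finset.mem_filter]
    exact ⟨Finset.mem_univ _, by rw [Equiv.symm_apply_apply]⟩
  · intro k hk
    simp only [Finset.mem_filter] at hk
    exact (Equiv.apply_eq_iff_eq_symm_apply T).mpr (Subtype.ext (Prod.ext hk.2.symm rfl))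
  · intro j hj
    show (T.symm (T _)).val.2 = j
    rw [Equiv.symm_apply_apply]

theorem downset_filter {s q j : ℕ} (l : Fin s → ℕ) (hl : Antitone l) :
    min (Finset.univ.filter fun i : Fin s => j < l i).card q ≤
      ((Finset.univ.filter fun i : Fin s => j < l i).filter fun i : Fin s => ¬ q ≤ (i : ℕ)).card := by
  by_cases hex : ∃ i ∈ Finset.univ.filter fun i : Fin s => j < l i, q ≤ (i : ℕ)
  · obtain ⟨i, hiS, hiq⟩ := hex
    have hqs : q < s := lt_of_le_of_lt hiq i.isLt
    refine le_trans (min_le_right _ _) ?_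
    have key : (Finset.range q).card ≤ ((Finset.univ.filter fun i : Fin s => j < l i).filter
        fun i : Fin s => ¬ q ≤ (i : ℕ)).card := by
      apply Finset.card_le_card_of_injOn (fun m => (⟨m % s, Nat.mod_lt _ (by omega)⟩ : Fin s))
      · intro m hm
        rw [Finset.mem_coe, Finset.mem_range] at hm
        have hms : m % s = m := Nat.mod_eq_of_lt (by omega)
        simp only [Finset.mem_coe, Finset.mem_filter] at hiS ⊢
        have hle : (⟨m % s, Nat.mod_lt _ (by omega)⟩ : Fin s) ≤ i := by
          rw [Fin.le_def]; simp only [hms]; omega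
        refine ⟨⟨Finset.mem_univ _, lt_of_lt_of_le hiS.2 (hl hle)⟩, ?_⟩
        simp only [hms]; omega
      · intro m hm m' hm' hmm
        rw [Finset.coe_range, Set.mem_Iio] at hm hm'
        have h := congrArg Fin.val hmm
        simp only at h
        rwa [Nat.mod_eq_of_lt (by omega), Nat.mod_eq_of_lt (by omega)] at h
    rw [Finset.card_range] at key
    exact key
  · push_neg at hex
    rw [Finset.filter_eq_self.mpr (fun i hi => Nat.not_le.mpr (hex i hi))]
    exact min_le_left _ _

theorem counting_lemma {n s q p : ℕ} (l : Fin s → ℕ) (hl : Antitone l)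
    (hln : ∑ i, l i = n)
    (htail : p ≤ ∑ i ∈ Finset.univ.filter (fun i : Fin s => q ≤ (i : ℕ)), l i)
    (T : {c : Fin s × ℕ // c.2 < l c.1} ≃ Fin n)
    (good : Fin n → Prop)
    (hcol : ∀ j : ℕ, (Finset.univ.filter fun k => ¬ good k ∧ (T.symm k).val.2 = j).card ≤
       min (Finset.univ.filter fun k => (T.symm k).val.2 = j).card q) :
    p ≤ (Finset.univ.filter good).card := by
  have hcoln : ∀ k : Fin n, (T.symm k).val.2 < n := by
    intro k
    calc (T.symm k).val.2 < l (T.symm k).val.1 := (T.symm k).prop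
    _ ≤ ∑ i, l i := Finset.single_le_sum (fun i _ => Nat.zero_le _) (Finset.mem_univ _)
    _ = n := hln
  -- the "high rows" count
  have hHigh : (Finset.univ.filter fun k : Fin n => q ≤ ((T.symm k).val.1 : ℕ)).card =
      ∑ i ∈ Finset.univ.filter (fun i : Fin s => q ≤ (i : ℕ)), l i := by
    rw [Finset.card_eq_sum_card_fiberwise (f := fun k => (T.symm k).val.1)
      (t := Finset.univ.filter (fun i : Fin s => q ≤ (i : ℕ)))]
    · apply Finset.sum_congr rfl
      intro i hi
      rw [Finset.mem_filter] at hi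
      rw [Finset.filter_filter, ← tableau_row_fiber l T i]
      congr 1
      refine Finset.filter_congr fun k _ => ?_
      constructor
      · exact fun h => h.2
      · exact fun h => ⟨by rw [h]; exact hi.2, h⟩
    · intro k hk
      rw [Finset.mem_coe, Finset.mem_filter] at hk ⊢
      exact ⟨Finset.mem_univ _, hk.2⟩
  -- bad ≤ low
  have hBadLow : (Finset.univ.filter fun k : Fin n => ¬ good k).card ≤
      (Finset.univ.filter fun k : Fin n => ¬ q ≤ ((T.symm k).val.1 : ℕ)).card := by
    rw [Finset.card_eq_sum_card_fiberwise (f := fun k => (T.symm k).val.2)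
      (t := Finset.range n) (fun k _ => Finset.mem_range.mpr (hcoln k)),
      Finset.card_eq_sum_card_fiberwise (f := fun k => (T.symm k).val.2)
      (t := Finset.range n) (fun k _ => Finset.mem_range.mpr (hcoln k))]
    apply Finset.sum_le_sum
    intro j _
    have e1 : (Finset.filter (fun k => (T.symm k).val.2 = j)
        (Finset.univ.filter fun k : Fin n => ¬ good k)) =
        Finset.univ.filter fun k => ¬ good k ∧ (T.symm k).val.2 = j := by
      rw [Finset.filter_filter]
    have e2 : (Finset.filter (fun k => (T.symm k).val.2 = j)
        (Finset.univ.filter fun k : Fin n => ¬ q ≤ ((T.symm k).val.1 : ℕ))) =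
        Finset.univ.filter fun k => (¬ q ≤ ((T.symm k).val.1 : ℕ)) ∧ (T.symm k).val.2 = j := by
      rw [Finset.filter_filter]
    rw [e1, e2]
    calc (Finset.univ.filter fun k => ¬ good k ∧ (T.symm k).val.2 = j).card
        ≤ min (Finset.univ.filter fun k => (T.symm k).val.2 = j).card q := hcol j
      _ = min (Finset.univ.filter fun i : Fin s => j < l i).card q := by
          congr 1
          have h := tableau_fiber_gen l T j (fun _ => True)
          simpa using h
      _ ≤ ((Finset.univ.filter fun i : Fin s => j < l i).filter fun i : Fin s => ¬ q ≤ (i : ℕ)).card :=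
          downset_filter l hl
      _ = (Finset.univ.filter fun i : Fin s => (¬ q ≤ (i : ℕ)) ∧ j < l i).card := by
          rw [Finset.filter_filter]
          congr 1
          apply Finset.filter_congr
          intro i _
          tauto
      _ = (Finset.univ.filter fun k : Fin n =>
            (¬ q ≤ ((T.symm k).val.1 : ℕ)) ∧ (T.symm k).val.2 = j).card := by
          have h := tableau_fiber_gen l T j (fun i : Fin s => ¬ q ≤ (i : ℕ))
          convert h.symm using 2 <;> exact Finset.ext fun x => by simp
  -- put it together
  have h1 := Finset.card_filter_add_card_filter_not (s := (Finset.univ : Finset (Fin n)))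
    (p := good)
  have h2 := Finset.card_filter_add_card_filter_not (s := (Finset.univ : Finset (Fin n)))
    (p := fun k => q ≤ ((T.symm k).val.1 : ℕ))
  rw [Finset.card_univ, Fintype.card_fin] at h1 h2
  omega

/-- Let `A` be a finite dimensional associative algebra with a generalized
`H`-action over a field `F` of characteristic `0`, and `I ⊆ A` an `H`-invariant ideal with
`Iᵖ = 0`.  Let `λ = (λ₁, …, λ_s) ⊢ n` be a partition with `Σ_{k > dim A − dim I} λ_k ≥ p`.
Then for every Young tableau `T_λ` of shape `λ` and every multilinear `H`-polynomial
`f ∈ P_n^H`, the element `e*_{T_λ} f = b_{T_λ} a_{T_λ} f` is a polynomial `H`-identity of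
`A` (here expressed in the space of representable `n`-linear functions, where being an
identity means being the zero function); consequently the multiplicity `m(A, H, λ)` of
`χ(λ)` in the `n`-th cocharacter of `A` is zero. -/
theorem youngSymmetrized_is_identity
    (F : Type*) [Field F] [CharZero F]
    (A : Type*) [NonUnitalRing A] [Module F A] [IsScalarTower F A A] [SMulCommClass F A A]
    [FiniteDimensional F A]
    (H : Type*) [Ring H] [Algebra F H]
    -- the generalized `H`-action on `A`
    (ζ : H →ₐ[F] Module.End F A)
    (hGA : ∀ h : H, ∃ (k : ℕ) (h' h'' h''' h'''' : Fin k → H), ∀ a b : A,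
      ζ h (a * b) = ∑ i, (ζ (h' i) a * ζ (h'' i) b + ζ (h''' i) b * ζ (h'''' i) a))
    -- `I` is an `H`-invariant ideal with `Iᵖ = 0`
    (I : Submodule F A)
    (hIideal : ∀ a : A, ∀ x ∈ I, a * x ∈ I ∧ x * a ∈ I)
    (hIinv : ∀ h : H, ∀ x ∈ I, ζ h x ∈ I)
    (p : ℕ) (hp : 0 < p)
    (hIp : ∀ x : Fin p → A, (∀ i, x i ∈ I) → evalWord (List.ofFn x) = 0)
    -- `λ = (λ₁, …, λ_s)` is a partition of `n` with `Σ_{k > dim A − dim I} λ_k ≥ p`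
    (n s : ℕ) (l : Fin s → ℕ) (hl : Antitone l) (hlpos : ∀ i, 0 < l i)
    (hln : ∑ i, l i = n)
    (htail : p ≤ ∑ i ∈ Finset.univ.filter
      (fun i : Fin s => Module.finrank F A - Module.finrank F I ≤ (i : ℕ)), l i)
    -- `T` is a Young tableau of shape `λ`: a bijective filling of the diagram by `1, …, n`
    (T : {c : Fin s × ℕ // c.2 < l c.1} ≃ Fin n)
    -- `f` is a multilinear `H`-polynomial (represented as an `n`-linear function)
    (f : (Fin n → A) → A) (hf : f ∈ monomialSpan F (fun h : H => ζ h) n) :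
    -- `e*_{T_λ} f = b_{T_λ} a_{T_λ} f` is an `H`-identity of `A`, i.e. the zero function
    (∑ σ ∈ Finset.univ.filter
        (fun σ : Equiv.Perm (Fin n) => ∀ c, (T.symm (σ (T c))).val.2 = c.val.2),
      (((Equiv.Perm.sign σ : ℤ) : F) •
        permAct σ (∑ π ∈ Finset.univ.filter
          (fun π : Equiv.Perm (Fin n) => ∀ c, (T.symm (π (T c))).val.1 = c.val.1),
          permAct π f))) = 0 := by
    classical
  obtain ⟨J, hJ⟩ := Submodule.exists_isCompl I
  let b : Module.Basis (Fin (Module.finrank F I) ⊕ Fin (Module.finrank F J)) F A :=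
    ((Module.finBasis F I).prod (Module.finBasis F J)).map (Submodule.prodEquivOfIsCompl I J hJ)
  have hbI : ∀ i, b (Sum.inl i) ∈ I := by
    intro i
    show (((Module.finBasis F I).prod (Module.finBasis F J)).map
      (Submodule.prodEquivOfIsCompl I J hJ)) (Sum.inl i) ∈ I
    rw [Module.Basis.map_apply]
    have h1 : ((Module.finBasis F I).prod (Module.finBasis F J)) (Sum.inl i) =
        (Module.finBasis F I i, 0) := by
      ext
      · rw [Module.Basis.prod_apply_inl_fst]
      · rw [Module.Basis.prod_apply_inl_snd]
    rw [h1]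
    have h2 : (Submodule.prodEquivOfIsCompl I J hJ) (Module.finBasis F I i, 0) =
        ↑(Module.finBasis F I i) + ↑(0 : J) := by
      have hco := Submodule.coe_prodEquivOfIsCompl I J hJ
      calc (Submodule.prodEquivOfIsCompl I J hJ) (Module.finBasis F I i, 0)
          = (↑(Submodule.prodEquivOfIsCompl I J hJ) : I × J →ₗ[F] A)
            (Module.finBasis F I i, 0) := rfl
        _ = _ := by rw [hco]; simp
    rw [h2]
    simp
  have hJq : Module.finrank F J = Module.finrank F A - Module.finrank F I := by
    have h := Submodule.finrank_add_eq_of_isCompl hJ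
    omega
  set Srow := Finset.univ.filter
    (fun π : Equiv.Perm (Fin n) => ∀ c, (T.symm (π (T c))).val.1 = c.val.1) with hSrow
  set Scol := Finset.univ.filter
    (fun σ : Equiv.Perm (Fin n) => ∀ c, (T.symm (σ (T c))).val.2 = c.val.2) with hScol
  set G : (Fin n → A) → A := ∑ π ∈ Srow, permAct π f with hG
  set E : (Fin n → A) → A :=
    ∑ σ ∈ Scol, ((Equiv.Perm.sign σ : ℤ) : F) • permAct σ G with hE
  show E = 0
  have hGmem : G ∈ monomialSpan F (fun h : H => ζ h) n :=
    Submodule.sum_mem _ fun π _ => permAct_mem_monomialSpan (fun h : H => ζ h) π hf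
  have hEmem : E ∈ monomialSpan F (fun h : H => ζ h) n :=
    Submodule.sum_mem _ fun σ _ =>
      Submodule.smul_mem _ _ (permAct_mem_monomialSpan (fun h : H => ζ h) σ hGmem)
  have hElin : ∀ i, IsLinAt (F := F) E i :=
    fun i => monomialSpan_le_linAt (fun h : H => ζ h) i hEmem
  have hEapp : ∀ a : Fin n → A, E a =
      ∑ σ ∈ Scol, ((Equiv.Perm.sign σ : ℤ) : F) • G (fun i => a (σ i)) := by
    intro a
    rw [hE, Finset.sum_apply]
    rfl
  -- alternation in columns
  have key_swap : ∀ (c₁ c₂ : {c : Fin s × ℕ // c.2 < l c.1}), c₁.val.2 = c₂.val.2 → c₁ ≠ c₂ →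
      ∀ a : Fin n → A, a (T c₁) = a (T c₂) → E a = 0 := by
    intro c₁ c₂ hcc hne a ha
    have hTne : T c₁ ≠ T c₂ := fun h => hne (T.injective h)
    set t := Equiv.swap (T c₁) (T c₂) with ht
    have htcol : ∀ k : Fin n, (T.symm (t k)).val.2 = (T.symm k).val.2 := by
      intro k
      rcases eq_or_ne k (T c₁) with rfl | h1
      · rw [ht, Equiv.swap_apply_left, Equiv.symm_apply_apply, Equiv.symm_apply_apply, hcc]
      rcases eq_or_ne k (T c₂) with rfl | h2
      · rw [ht, Equiv.swap_apply_right, Equiv.symm_apply_apply, Equiv.symm_apply_apply, hcc]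
      · rw [ht, Equiv.swap_apply_of_ne_of_ne h1 h2]
    have hmem : ∀ σ ∈ Scol, t * σ ∈ Scol := by
      intro σ hσ
      rw [hScol, Finset.mem_filter] at hσ ⊢
      refine ⟨Finset.mem_univ _, fun c => ?_⟩
      rw [Equiv.Perm.mul_apply, htcol (σ (T c))]
      exact hσ.2 c
    have hsign : ∀ σ : Equiv.Perm (Fin n),
        ((Equiv.Perm.sign (t * σ) : ℤ) : F) = -((Equiv.Perm.sign σ : ℤ) : F) := by
      intro σ
      rw [Equiv.Perm.sign_mul, Equiv.Perm.sign_swap hTne]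
      push_cast
      ring
    have hat : (fun i => a (t i)) = a := by
      funext i
      rcases eq_or_ne i (T c₁) with rfl | h1
      · rw [ht, Equiv.swap_apply_left, ha]
      rcases eq_or_ne i (T c₂) with rfl | h2
      · rw [ht, Equiv.swap_apply_right, ha]
      · rw [ht, Equiv.swap_apply_of_ne_of_ne h1 h2]
    have hneg : E (fun i => a (t i)) = - E a := by
      rw [hEapp, hEapp, ← Finset.sum_neg_distrib]
      refine Finset.sum_nbij' (fun σ => t * σ) (fun σ => t * σ) hmem hmem
        (fun σ _ => Equiv.swap_mul_self_mul _ _ _)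
        (fun σ _ => Equiv.swap_mul_self_mul _ _ _) ?_
      intro σ _
      rw [hsign σ, neg_smul, neg_neg]
      rfl
    rw [hat] at hneg
    have hzero : E a + E a = 0 := by
      nth_rewrite 2 [hneg]
      exact add_neg_cancel _
    have h2 : E a = (2 : F)⁻¹ • ((2 : F) • E a) := by
      rw [smul_smul, inv_mul_cancel₀ (by norm_num : (2:F) ≠ 0), one_smul]
    rw [h2, two_smul, hzero, smul_zero]
  -- vanishing on inputs with many entries in `I`
  have hvanish : ∀ a : Fin n → A,
      p ≤ (Finset.univ.filter fun k => a k ∈ I).card → E a = 0 := by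
    intro a hcard
    have hker : monomialSpan F (fun h : H => ζ h) n ≤
        LinearMap.ker (LinearMap.proj (R := F) (φ := fun _ : Fin n → A => A) a) := by
      rw [monomialSpan, Submodule.span_le]
      rintro g ⟨τ, hh, rfl⟩
      simp only [SetLike.mem_coe, LinearMap.mem_ker, LinearMap.proj_apply]
      apply evalWord_eq_zero_of_count hIideal hp hIp
      rw [countP_ofFn]
      have hcardeq : (Finset.univ.filter fun k : Fin n => a k ∈ I).card =
          (Finset.univ.filter fun i : Fin n => a (τ i) ∈ I).card := by
        refine (Finset.card_bij (fun i _ => τ i) ?_ ?_ ?_).symm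
        · intro i hi
          rw [Finset.mem_filter] at hi ⊢
          exact ⟨Finset.mem_univ _, hi.2⟩
        · intro i _ i' _ h
          exact τ.injective h
        · intro k hk
          rw [Finset.mem_filter] at hk
          refine ⟨τ.symm k, ?_, Equiv.apply_symm_apply _ _⟩
          rw [Finset.mem_filter, Equiv.apply_symm_apply]
          exact ⟨Finset.mem_univ _, hk.2⟩
      have hsub : (Finset.univ.filter fun i : Fin n => a (τ i) ∈ I) ⊆
          (Finset.univ.filter fun i : Fin n =>
            decide ((ζ (hh i) : Module.End F A) (a (τ i)) ∈ I) = true) := by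
        intro i hi
        rw [Finset.mem_filter] at hi ⊢
        exact ⟨Finset.mem_univ _, by simpa using hIinv _ _ hi.2⟩
      calc p ≤ (Finset.univ.filter fun k : Fin n => a k ∈ I).card := hcard
        _ = (Finset.univ.filter fun i : Fin n => a (τ i) ∈ I).card := hcardeq
        _ ≤ _ := Finset.card_le_card hsub
    have hm := hker hEmem
    rw [LinearMap.mem_ker] at hm
    exact hm
  -- vanishing on basis-valued inputs
  have hb0 : ∀ v : Fin n → (Fin (Module.finrank F I) ⊕ Fin (Module.finrank F J)),
      E (fun k => b (v k)) = 0 := by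
    intro v
    by_cases hrep : ∃ c₁ c₂ : {c : Fin s × ℕ // c.2 < l c.1},
        c₁.val.2 = c₂.val.2 ∧ c₁ ≠ c₂ ∧ v (T c₁) = v (T c₂)
    · obtain ⟨c₁, c₂, h1, h2, h3⟩ := hrep
      exact key_swap c₁ c₂ h1 h2 _ (by rw [h3])
    · push_neg at hrep
      apply hvanish
      apply counting_lemma l hl hln htail T
      intro j
      refine le_min ?_ ?_
      · apply Finset.card_le_card
        intro k hk
        rw [Finset.mem_filter] at hk ⊢
        exact ⟨hk.1, hk.2.2⟩
      · calc (Finset.univ.filter fun k : Fin n =>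
              ¬ (fun k => b (v k)) k ∈ I ∧ (T.symm k).val.2 = j).card
            ≤ (Finset.univ.image (Sum.inr :
              Fin (Module.finrank F J) → Fin (Module.finrank F I) ⊕ Fin (Module.finrank F J))).card := by
              apply Finset.card_le_card_of_injOn v
              · intro k hk
                simp only [Finset.mem_coe, Finset.mem_filter] at hk ⊢
                rcases hv : v k with i | m
                · exact absurd (show b (v k) ∈ I from hv ▸ hbI i) hk.2.1
                · exact Finset.mem_image.mpr ⟨m, Finset.mem_univ _, rfl⟩
              · intro k hk k' hk' hvv
                rw [Finset.coe_filter, Set.mem_setOf_eq] at hk hk'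
                have hcells : T.symm k = T.symm k' := by
                  by_contra hne
                  exact hrep (T.symm k) (T.symm k')
                    (by rw [hk.2.2, hk'.2.2]) hne
                    (by rwa [Equiv.apply_symm_apply, Equiv.apply_symm_apply])
                have := congrArg T hcells
                rwa [Equiv.apply_symm_apply, Equiv.apply_symm_apply] at this
          _ ≤ (Finset.univ : Finset (Fin (Module.finrank F J))).card := Finset.card_image_le
          _ = Module.finrank F J := by rw [Finset.card_univ, Fintype.card_fin]
          _ = Module.finrank F A - Module.finrank F I := hJq
  funext a
  rw [show (0 : (Fin n → A) → A) a = 0 from rfl]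
  exact eq_zero_of_multilinear_of_basis_zero b E hElin hb0 a
end
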